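/- If A/B is a QF ring extension, then the natural (A, A)-bimodules End(_BA), A ⊗_B A, and End(A_B) are pairwise similar; moreover A ⊗_B A ∼ End(A_B) as (E, A)-bimodules where E = End(A_B). -/

import Mathlib

open scoped TensorProduct

noncomputable section

section Bimod

variable (L R : Type) [Ring L] [Ring R]

def BDiv {M N : Type} [AddCommGroup M] [AddCommGroup N]
    (lM : L → M → M) (rM : M → R → M) (lN : L → N → N) (rN : N → R → N) : Prop :=
  ∃ (n : ℕ) (f : M →+ (Fin n → N)) (g : (Fin n → N) →+ M),
    (∀ (l : L) (m : M), f (lM l m) = fun i => lN l (f m i)) ∧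
    (∀ (m : M) (r : R), f (rM m r) = fun i => rN (f m i) r) ∧
    (∀ (l : L) (v : Fin n → N), g (fun i => lN l (v i)) = lM l (g v)) ∧
    (∀ (v : Fin n → N) (r : R), g (fun i => rN (v i) r) = rM (g v) r) ∧
    ∀ m : M, g (f m) = m

def BSim {M N : Type} [AddCommGroup M] [AddCommGroup N]
    (lM : L → M → M) (rM : M → R → M) (lN : L → N → N) (rN : N → R → N) : Prop :=
  BDiv L R lM rM lN rN ∧ BDiv L R lN rN lM rM

end Bimod

section Ext

variable {R S : Type} [Ring R] [Ring S] (ψ : R →+* S)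

def rdualSub : AddSubgroup (S →+ R) where
  carrier := {h | ∀ (x : S) (r : R), h (x * ψ r) = h x * r}
  add_mem' := by
    intro a b ha hb
    intro x r
    simp only [AddMonoidHom.add_apply, ha x r, hb x r, add_mul]
  zero_mem' := by intro x r; simp
  neg_mem' := by
    intro a ha x r
    simp only [AddMonoidHom.neg_apply, ha x r, neg_mul]

def ldualSub : AddSubgroup (S →+ R) where
  carrier := {h | ∀ (r : R) (x : S), h (ψ r * x) = r * h x}
  add_mem' := by
    intro a b ha hb r x
    simp only [AddMonoidHom.add_apply, ha r x, hb r x, mul_add]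
  zero_mem' := by intro r x; simp
  neg_mem' := by
    intro a ha r x
    simp only [AddMonoidHom.neg_apply, ha r x, mul_neg]

def rdualL (r : R) (h : rdualSub ψ) : rdualSub ψ :=
  ⟨(AddMonoidHom.mulLeft r).comp h.1, by
    intro x r'
    simp only [AddMonoidHom.coe_comp, Function.comp_apply, AddMonoidHom.coe_mulLeft,
      h.2 x r', mul_assoc]⟩

def rdualR (h : rdualSub ψ) (s : S) : rdualSub ψ :=
  ⟨h.1.comp (AddMonoidHom.mulLeft s), by
    intro x r'
    simp only [AddMonoidHom.coe_comp, Function.comp_apply, AddMonoidHom.coe_mulLeft,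
      ← mul_assoc]
    exact h.2 (s * x) r'⟩

def ldualL (s : S) (h : ldualSub ψ) : ldualSub ψ :=
  ⟨h.1.comp (AddMonoidHom.mulRight s), by
    intro r x
    simp only [AddMonoidHom.coe_comp, Function.comp_apply, AddMonoidHom.coe_mulRight,
      mul_assoc]
    exact h.2 r (x * s)⟩

def ldualR (h : ldualSub ψ) (r : R) : ldualSub ψ :=
  ⟨(AddMonoidHom.mulRight r).comp h.1, by
    intro r' x
    simp only [AddMonoidHom.coe_comp, Function.comp_apply, AddMonoidHom.coe_mulRight,
      h.2 r' x, mul_assoc]⟩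

def tensorRel : AddSubgroup (S ⊗[ℤ] S) :=
  AddSubgroup.closure {z | ∃ (x y : S) (r : R),
    z = (x * ψ r) ⊗ₜ[ℤ] y - x ⊗ₜ[ℤ] (ψ r * y)}

def TensorSq := (S ⊗[ℤ] S) ⧸ tensorRel ψ

instance : AddCommGroup (TensorSq ψ) := QuotientAddGroup.Quotient.addCommGroup _

def tmk (x y : S) : TensorSq ψ := QuotientAddGroup.mk (x ⊗ₜ[ℤ] y)

def tL (a : S) : TensorSq ψ →+ TensorSq ψ :=
  QuotientAddGroup.map _ _
    ((TensorProduct.map (AddMonoidHom.mulLeft a).toIntLinearMap LinearMap.id).toAddMonoidHom)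
    (by
      show tensorRel ψ ≤ AddSubgroup.comap _ (tensorRel ψ)
      rw [tensorRel, AddSubgroup.closure_le]
      rintro z ⟨x, y, r, rfl⟩
      simp only [SetLike.mem_coe, AddSubgroup.mem_comap, LinearMap.toAddMonoidHom_coe,
        map_sub, TensorProduct.map_tmul, AddMonoidHom.coe_toIntLinearMap,
        AddMonoidHom.coe_mulLeft, LinearMap.id_coe, id_eq]
      exact AddSubgroup.subset_closure ⟨a * x, y, r, by rw [mul_assoc]⟩)

def tR (a : S) : TensorSq ψ →+ TensorSq ψ :=
  QuotientAddGroup.map _ _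
    ((TensorProduct.map LinearMap.id (AddMonoidHom.mulRight a).toIntLinearMap).toAddMonoidHom)
    (by
      show tensorRel ψ ≤ AddSubgroup.comap _ (tensorRel ψ)
      rw [tensorRel, AddSubgroup.closure_le]
      rintro z ⟨x, y, r, rfl⟩
      simp only [SetLike.mem_coe, AddSubgroup.mem_comap, LinearMap.toAddMonoidHom_coe,
        map_sub, TensorProduct.map_tmul, AddMonoidHom.coe_toIntLinearMap,
        AddMonoidHom.coe_mulRight, LinearMap.id_coe, id_eq]
      exact AddSubgroup.subset_closure ⟨x, y * a, r, by rw [mul_assoc]⟩)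

/-- The multiplication map `S ⊗_R S → S`, `x ⊗ y ↦ x * y`. -/
def tmul' : TensorSq ψ →+ S :=
  QuotientAddGroup.lift _ (LinearMap.mul' ℤ S).toAddMonoidHom
    (by
      intro z hz
      induction hz using AddSubgroup.closure_induction with
      | mem z hz =>
        obtain ⟨x, y, r, rfl⟩ := hz
        simp [mul_assoc]
      | zero => simp
      | add a b _ _ ha hb =>
        simp only [AddMonoidHom.mem_ker, LinearMap.toAddMonoidHom_coe] at ha hb ⊢
        simp [map_add, ha, hb]
      | neg a _ ha =>
        simp only [AddMonoidHom.mem_ker, LinearMap.toAddMonoidHom_coe] at ha ⊢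
        simp [ha])

end Ext


section ExtEnd

variable {R S : Type} [Ring R] [Ring S] (ψ : R →+* S)

/-- `End(S_R)`: additive endomorphisms of `S` commuting with the right `R`-action
(along `ψ`), as a subring of `AddMonoid.End S`. -/
def endR : Subring (AddMonoid.End S) where
  carrier := {e | ∀ (x : S) (r : R), e (x * ψ r) = e x * ψ r}
  mul_mem' := by
    intro a b ha hb x r
    show a (b (x * ψ r)) = a (b x) * ψ r
    rw [hb, ha]
  one_mem' := by intro x r; rfl
  add_mem' := by
    intro a b ha hb x r
    show a (x * ψ r) + b (x * ψ r) = (a x + b x) * ψ r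
    rw [ha, hb, add_mul]
  zero_mem' := by
    intro x r
    show (0 : S) = 0 * ψ r
    rw [zero_mul]
  neg_mem' := by
    intro a ha x r
    show -(a (x * ψ r)) = -(a x) * ψ r
    rw [ha, neg_mul]

/-- `End(_RS)`: additive endomorphisms of `S` commuting with the left `R`-action
(along `ψ`), as a subring of `AddMonoid.End S`. -/
def endL : Subring (AddMonoid.End S) where
  carrier := {e | ∀ (r : R) (x : S), e (ψ r * x) = ψ r * e x}
  mul_mem' := by
    intro a b ha hb r x
    show a (b (ψ r * x)) = ψ r * a (b x)
    rw [hb, ha]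
  one_mem' := by intro r x; rfl
  add_mem' := by
    intro a b ha hb r x
    show a (ψ r * x) + b (ψ r * x) = ψ r * (a x + b x)
    rw [ha, hb, mul_add]
  zero_mem' := by
    intro r x
    show (0 : S) = ψ r * 0
    rw [mul_zero]
  neg_mem' := by
    intro a ha r x
    show -(a (ψ r * x)) = ψ r * -(a x)
    rw [ha, mul_neg]

/-- The left regular representation `λ : S → End(S_R)`, `s ↦ (x ↦ s * x)`. -/
def lam : S →+* endR ψ where
  toFun s := ⟨(AddMonoidHom.mulLeft s : S →+ S), by
    intro x r
    show s * (x * ψ r) = s * x * ψ r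
    rw [mul_assoc]⟩
  map_one' := by
    apply Subtype.ext
    refine AddMonoidHom.ext fun x => ?_
    show (1 : S) * x = x
    rw [one_mul]
  map_mul' s t := by
    apply Subtype.ext
    refine AddMonoidHom.ext fun x => ?_
    show (s * t) * x = s * (t * x)
    rw [mul_assoc]
  map_zero' := by
    apply Subtype.ext
    refine AddMonoidHom.ext fun x => ?_
    show (0 : S) * x = 0
    rw [zero_mul]
  map_add' s t := by
    apply Subtype.ext
    refine AddMonoidHom.ext fun x => ?_
    show (s + t) * x = s * x + t * x
    rw [add_mul]

/-- Right multiplication `ρ : S → End(_RS)`, `s ↦ (x ↦ x * s)`. -/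
def rho (s : S) : endL ψ :=
  ⟨(AddMonoidHom.mulRight s : S →+ S), by
    intro r x
    show (ψ r * x) * s = ψ r * (x * s)
    rw [mul_assoc]⟩

/-- Left `S`-action on `End(_RS)`: `(x · f)(z) = f (z * x)`. -/
def endLL (x : S) (f : endL ψ) : endL ψ :=
  ⟨(f.1 : S →+ S).comp (AddMonoidHom.mulRight x), by
    intro r z
    show (f.1 : S →+ S) ((ψ r * z) * x) = ψ r * (f.1 : S →+ S) (z * x)
    rw [mul_assoc]
    exact f.2 r (z * x)⟩

/-- Right `S`-action on `End(_RS)`: `(f · y)(z) = f z * y`. -/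
def endLR (f : endL ψ) (y : S) : endL ψ :=
  ⟨(AddMonoidHom.mulRight y).comp (f.1 : S →+ S), by
    intro r z
    show (f.1 : S →+ S) (ψ r * z) * y = ψ r * ((f.1 : S →+ S) z * y)
    rw [f.2 r z, mul_assoc]⟩

end ExtEnd

section QF

variable {B A : Type} [Ring B] [Ring A] (φ : B →+* A)

/-- `φ : B → A` is a left QF-extension: `_B A` is finitely generated projective and `A`
divides `(_B A)* = Hom_{B-}(A,B)` as `(A,B)`-bimodules. -/
def IsLeftQF : Prop :=
  (letI : Module B A := Module.compHom A φ
   Module.Finite B A ∧ Module.Projective B A) ∧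
  BDiv A B (fun a x => a * x) (fun x b => x * φ b) (ldualL φ) (ldualR φ)

/-- `φ : B → A` is a right QF-extension: `A_B` is finitely generated projective and `A`
divides `(A_B)* = Hom_{-B}(A,B)` as `(B,A)`-bimodules. -/
def IsRightQF : Prop :=
  (letI : Module Bᵐᵒᵖ A := Module.compHom A φ.op
   Module.Finite Bᵐᵒᵖ A ∧ Module.Projective Bᵐᵒᵖ A) ∧
  BDiv B A (fun b x => φ b * x) (fun x a => x * a) (rdualL φ) (rdualR φ)

/-- `φ : B → A` is a QF extension: both a left and a right QF extension. -/
def IsQFExt : Prop := IsLeftQF φ ∧ IsRightQF φ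

end QF


section ETensor

variable {B A : Type} [Ring B] [Ring A] (φ : B →+* A)

/-- Left action of `E = End(A_B)` on `A ⊗_B A` via the first factor. -/
def endRTmulL (e : endR φ) : TensorSq φ →+ TensorSq φ :=
  QuotientAddGroup.map _ _
    ((TensorProduct.map ((e.1 : A →+ A)).toIntLinearMap LinearMap.id).toAddMonoidHom)
    (by
      show tensorRel φ ≤ AddSubgroup.comap _ (tensorRel φ)
      rw [tensorRel, AddSubgroup.closure_le]
      rintro z ⟨x, y, b, rfl⟩
      simp only [SetLike.mem_coe, AddSubgroup.mem_comap, LinearMap.toAddMonoidHom_coe,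
        map_sub, TensorProduct.map_tmul, AddMonoidHom.coe_toIntLinearMap,
        LinearMap.id_coe, id_eq]
      apply AddSubgroup.subset_closure
      exact ⟨(e.1 : A →+ A) x, y, b,
        congrArg (fun t : A => t ⊗ₜ[ℤ] y - (e.1 : A →+ A) x ⊗ₜ[ℤ] (φ b * y)) (e.2 x b)⟩)

end ETensor


section Auxiliary

/-- Generic finite dual basis for a finitely generated projective module. -/
lemma exists_dual_basis (R M : Type*) [Ring R] [AddCommGroup M] [Module R M]
    (hfin : Module.Finite R M) (hproj : Module.Projective R M) :
    ∃ (n : ℕ) (x : Fin n → M) (h : Fin n → (M →ₗ[R] R)),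
      ∀ m : M, ∑ j, h j m • x j = m := by
  obtain ⟨n, π, hπ⟩ := Module.Finite.exists_fin' R M
  obtain ⟨s, hs⟩ := Module.projective_lifting_property π LinearMap.id hπ
  refine ⟨n, fun j => π (Pi.single j 1), fun j => (LinearMap.proj j).comp s, fun m => ?_⟩
  have h1 : ∀ (j : Fin n) (r : R), r • (Pi.single j (1:R) : Fin n → R) = Pi.single j r := by
    intro j r
    funext i
    simp [Pi.single_apply, mul_ite]
  calc ∑ j, ((LinearMap.proj j).comp s) m • π (Pi.single j 1)
      = π (∑ j, Pi.single j (s m j)) := by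
        rw [map_sum]
        refine Finset.sum_congr rfl fun j _ => ?_
        conv_rhs => rw [← h1, map_smul]
        rfl
    _ = m := by
        rw [Finset.univ_sum_single]
        exact LinearMap.congr_fun hs m

/-- Division of bimodules is transitive. -/
lemma BDiv.trans {L R : Type} [Ring L] [Ring R] {M N P : Type}
    [AddCommGroup M] [AddCommGroup N] [AddCommGroup P]
    {lM : L → M → M} {rM : M → R → M} {lN : L → N → N} {rN : N → R → N}
    {lP : L → P → P} {rP : P → R → P}
    (h1 : BDiv L R lM rM lN rN) (h2 : BDiv L R lN rN lP rP) :
    BDiv L R lM rM lP rP := by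
  obtain ⟨n, f, g, hfl, hfr, hgl, hgr, hgf⟩ := h1
  obtain ⟨m, f2, g2, hf2l, hf2r, hg2l, hg2r, hg2f⟩ := h2
  set e : Fin n × Fin m ≃ Fin (n * m) := finProdFinEquiv
  refine ⟨n * m,
    AddMonoidHom.mk' (fun x k => f2 (f x (e.symm k).1) (e.symm k).2)
      (by intro a b; funext k; simp),
    AddMonoidHom.mk' (fun v => g fun i => g2 fun j => v (e (i, j)))
      (by intro a b
          simp only [Pi.add_apply]
          rw [← map_add g]
          congr 1
          funext i
          simp only [Pi.add_apply]
          rw [← map_add g2]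
          rfl),
    ?_, ?_, ?_, ?_, ?_⟩
  · intro l x
    funext k
    simp only [AddMonoidHom.mk'_apply]
    rw [hfl]
    exact congrFun (hf2l l (f x (e.symm k).1)) (e.symm k).2
  · intro x r
    funext k
    simp only [AddMonoidHom.mk'_apply]
    rw [hfr]
    exact congrFun (hf2r (f x (e.symm k).1) r) (e.symm k).2
  · intro l v
    simp only [AddMonoidHom.mk'_apply]
    simp only [hg2l]
    exact hgl l _
  · intro v r
    simp only [AddMonoidHom.mk'_apply]
    simp only [hg2r]
    exact hgr _ r
  · intro x
    simp only [AddMonoidHom.mk'_apply, Equiv.symm_apply_apply]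
    have : ∀ i : Fin n, (g2 fun j => f2 (f x i) j) = f x i := fun i => hg2f (f x i)
    simp only [this]
    exact hgf x

end Auxiliary

section DualBases

variable {B A : Type} [Ring B] [Ring A] (φ : B →+* A)

lemma exists_rdual_basis
    (h : letI : Module Bᵐᵒᵖ A := Module.compHom A φ.op
         Module.Finite Bᵐᵒᵖ A ∧ Module.Projective Bᵐᵒᵖ A) :
    ∃ (J : ℕ) (x : Fin J → A) (hh : Fin J → rdualSub φ),
      ∀ a : A, ∑ j, x j * φ ((hh j).1 a) = a := by
  letI : Module Bᵐᵒᵖ A := Module.compHom A φ.op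
  obtain ⟨hfin, hproj⟩ := h
  obtain ⟨n, x, hb, hsum⟩ := exists_dual_basis Bᵐᵒᵖ A hfin hproj
  refine ⟨n, x, fun j =>
    ⟨((MulOpposite.opAddEquiv (α := B)).symm.toAddMonoidHom).comp (hb j).toAddMonoidHom,
     ?_⟩, fun a => ?_⟩
  · intro z r
    have : z * φ r = (MulOpposite.op r) • z := rfl
    simp only [AddMonoidHom.coe_comp, Function.comp_apply, LinearMap.toAddMonoidHom_coe,
      AddEquiv.coe_toAddMonoidHom, this, map_smul]
    rfl
  · have : ∀ j : Fin n, x j * φ (MulOpposite.unop (hb j a)) = hb j a • x j := fun j => rfl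
    simp only [AddMonoidHom.coe_comp, Function.comp_apply, LinearMap.toAddMonoidHom_coe,
      AddEquiv.coe_toAddMonoidHom, MulOpposite.opAddEquiv_symm_apply]
    rw [show (∑ j, x j * φ (MulOpposite.unop (hb j a))) = ∑ j, hb j a • x j from
      Finset.sum_congr rfl fun j _ => this j]
    exact hsum a

lemma exists_ldual_basis
    (h : letI : Module B A := Module.compHom A φ
         Module.Finite B A ∧ Module.Projective B A) :
    ∃ (K : ℕ) (y : Fin K → A) (gg : Fin K → ldualSub φ),
      ∀ a : A, ∑ k, φ ((gg k).1 a) * y k = a := by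
  letI : Module B A := Module.compHom A φ
  obtain ⟨hfin, hproj⟩ := h
  obtain ⟨n, y, hb, hsum⟩ := exists_dual_basis B A hfin hproj
  refine ⟨n, y, fun k => ⟨(hb k).toAddMonoidHom, ?_⟩, fun a => ?_⟩
  · intro r z
    have : φ r * z = r • z := rfl
    simp only [LinearMap.toAddMonoidHom_coe, this, map_smul]
    rfl
  · exact hsum a

end DualBases

section TSqAPI

variable {B A : Type} [Ring B] [Ring A] (φ : B →+* A)

lemma tmk_add_left (x x' y : A) : tmk φ (x + x') y = tmk φ x y + tmk φ x' y := by
  show QuotientAddGroup.mk _ = QuotientAddGroup.mk _ + QuotientAddGroup.mk _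
  rw [TensorProduct.add_tmul]
  rfl

lemma tmk_add_right (x y y' : A) : tmk φ x (y + y') = tmk φ x y + tmk φ x y' := by
  show QuotientAddGroup.mk _ = QuotientAddGroup.mk _ + QuotientAddGroup.mk _
  rw [TensorProduct.tmul_add]
  rfl

lemma tmk_rel (x : A) (b : B) (y : A) : tmk φ (x * φ b) y = tmk φ x (φ b * y) := by
  unfold tmk
  show (QuotientAddGroup.mk ((x * φ b) ⊗ₜ[ℤ] y) : (A ⊗[ℤ] A) ⧸ tensorRel φ)
    = QuotientAddGroup.mk (x ⊗ₜ[ℤ] (φ b * y))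
  rw [QuotientAddGroup.eq]
  have h : (x * φ b) ⊗ₜ[ℤ] y - x ⊗ₜ[ℤ] (φ b * y) ∈ tensorRel φ :=
    AddSubgroup.subset_closure ⟨x, y, b, rfl⟩
  have h2 := (tensorRel φ).neg_mem h
  rwa [neg_sub, sub_eq_neg_add] at h2

lemma tL_tmk (a x y : A) : tL φ a (tmk φ x y) = tmk φ (a * x) y := rfl

lemma tR_tmk (a x y : A) : tR φ a (tmk φ x y) = tmk φ x (y * a) := rfl

lemma endRTmulL_tmk (e : endR φ) (x y : A) :
    endRTmulL φ e (tmk φ x y) = tmk φ ((e.1 : A →+ A) x) y := rfl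

lemma TensorSq.ind {p : TensorSq φ → Prop} (h0 : p 0)
    (hadd : ∀ s t, p s → p t → p (s + t)) (htmk : ∀ x y, p (tmk φ x y)) :
    ∀ t, p t := by
  intro t
  obtain ⟨z, rfl⟩ := QuotientAddGroup.mk_surjective t
  induction z using TensorProduct.induction_on with
  | zero => exact h0
  | tmul x y => exact htmk x y
  | add a b ha hb => exact hadd _ _ ha hb

lemma biadd_zsmul {A : Type} [Ring A] {C : Type} [AddCommGroup C] (F : A →+ A →+ C) (r : ℤ) (m n : A) :
    F (r • m) n = F m (r • n) := by
  rw [map_zsmul, AddMonoidHom.smul_apply, ← map_zsmul]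

/-- Auxiliary unquotiented builder. -/
def mkTaux {A : Type} [Ring A] {C : Type} [AddCommGroup C] (c : A → A → C)
    (hl : ∀ x x' y, c (x + x') y = c x y + c x' y)
    (hr : ∀ x y y', c x (y + y') = c x y + c x y') : A ⊗[ℤ] A →+ C :=
  TensorProduct.liftAddHom
    (AddMonoidHom.mk' (fun x => AddMonoidHom.mk' (c x) (fun y y' => hr x y y'))
      (fun x x' => AddMonoidHom.ext fun y => hl x x' y))
    (biadd_zsmul _)

lemma mkTaux_tmul {A : Type} [Ring A] {C : Type} [AddCommGroup C] (c : A → A → C)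
    (hl : ∀ x x' y, c (x + x') y = c x y + c x' y)
    (hr : ∀ x y y', c x (y + y') = c x y + c x y') (x y : A) :
    mkTaux (A := A) c hl hr (x ⊗ₜ[ℤ] y) = c x y :=
  TensorProduct.liftAddHom_tmul _ _ _ _

/-- Builder for additive maps out of `TensorSq`. -/
def mkT {C : Type} [AddCommGroup C] (c : A → A → C)
    (hl : ∀ x x' y, c (x + x') y = c x y + c x' y)
    (hr : ∀ x y y', c x (y + y') = c x y + c x y')
    (hmid : ∀ x b y, c (x * φ b) y = c x (φ b * y)) : TensorSq φ →+ C :=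
  QuotientAddGroup.lift _ (mkTaux (A := A) c hl hr)
    (by
      have hker : tensorRel φ ≤ (mkTaux (A := A) c hl hr).ker := by
        rw [tensorRel, AddSubgroup.closure_le]
        rintro z ⟨x, y, b, rfl⟩
        simp only [SetLike.mem_coe, AddMonoidHom.mem_ker, map_sub, mkTaux_tmul]
        rw [hmid, sub_self]
      intro z hz
      exact AddMonoidHom.mem_ker.1 (hker hz))

lemma mkT_tmk {C : Type} [AddCommGroup C] (c : A → A → C)
    (hl : ∀ x x' y, c (x + x') y = c x y + c x' y)
    (hr : ∀ x y y', c x (y + y') = c x y + c x y')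
    (hmid : ∀ x b y, c (x * φ b) y = c x (φ b * y)) (x y : A) :
    mkT φ c hl hr hmid (tmk φ x y) = c x y := by
  show QuotientAddGroup.lift _ _ _ (QuotientAddGroup.mk _) = _
  show mkTaux (A := A) c hl hr (x ⊗ₜ[ℤ] y) = _
  exact mkTaux_tmul c hl hr x y

end TSqAPI


section SingleLemmas

lemma single_map {X Y : Type} [Zero X] [Zero Y] (T : X → Y) (h0 : T 0 = 0)
    {N : ℕ} (k : Fin N) (w : X) :
    (fun i => T ((Pi.single k w : Fin N → X) i)) = (Pi.single k (T w) : Fin N → Y) :=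
  funext fun i => by
    rcases eq_or_ne i k with rfl | hik
    · rw [Pi.single_eq_same, Pi.single_eq_same]
    · rw [Pi.single_eq_of_ne hik, Pi.single_eq_of_ne hik, h0]

lemma single_sum {X : Type} [AddCommGroup X] {N : ℕ} (k : Fin N) {ι : Type}
    (s : Finset ι) (w : ι → X) :
    (Pi.single k (∑ i ∈ s, w i) : Fin N → X) = ∑ i ∈ s, Pi.single k (w i) := by
  funext i
  rw [Finset.sum_apply]
  rcases eq_or_ne i k with rfl | hik
  · simp only [Pi.single_eq_same]
  · simp only [Pi.single_eq_of_ne hik, Finset.sum_const_zero]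

lemma addsub_sum_apply {G H : Type} [AddCommGroup G] [AddCommGroup H]
    {S : AddSubgroup (G →+ H)} {ι : Type} (s : Finset ι) (w : ι → S) (z : G) :
    ((∑ i ∈ s, w i : S) : G →+ H) z = ∑ i ∈ s, ((w i : G →+ H) z) := by
  rw [AddSubmonoidClass.coe_finset_sum]
  exact AddMonoidHom.finset_sum_apply _ _ _

lemma endsub_sum_apply {A : Type} [Ring A] {S : Subring (AddMonoid.End A)}
    {ι : Type} (s : Finset ι) (w : ι → S) (z : A) :
    ((∑ i ∈ s, w i : S) : AddMonoid.End A) z = ∑ i ∈ s, ((w i : AddMonoid.End A) z) := by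
  rw [AddSubmonoidClass.coe_finset_sum]
  exact AddMonoidHom.finset_sum_apply _ _ _

end SingleLemmas

section Main

variable {B A : Type} [Ring B] [Ring A] (φ : B →+* A)

lemma rdualL_zero (b : B) : rdualL φ b 0 = 0 := by
  apply Subtype.ext
  refine AddMonoidHom.ext fun z => ?_
  show b * (0 : A →+ B) z = 0
  simp

lemma rdualR_zero (a : A) : rdualR φ 0 a = 0 := by
  apply Subtype.ext
  refine AddMonoidHom.ext fun z => ?_
  show (0 : A →+ B) (a * z) = 0
  simp

lemma ldualL_zero (a : A) : ldualL φ a 0 = 0 := by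
  apply Subtype.ext
  refine AddMonoidHom.ext fun z => ?_
  show (0 : A →+ B) (z * a) = 0
  simp

lemma ldualR_zero (b : B) : ldualR φ 0 b = 0 := by
  apply Subtype.ext
  refine AddMonoidHom.ext fun z => ?_
  show (0 : A →+ B) z * b = 0
  simp

lemma rdualL_apply (b : B) (h : rdualSub φ) (z : A) :
    ((rdualL φ b h : rdualSub φ) : A →+ B) z = b * (h : A →+ B) z := rfl

lemma rdualR_apply (h : rdualSub φ) (a : A) (z : A) :
    ((rdualR φ h a : rdualSub φ) : A →+ B) z = (h : A →+ B) (a * z) := rfl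

lemma ldualL_apply (a : A) (h : ldualSub φ) (z : A) :
    ((ldualL φ a h : ldualSub φ) : A →+ B) z = (h : A →+ B) (z * a) := rfl

lemma ldualR_apply (h : ldualSub φ) (b : B) (z : A) :
    ((ldualR φ h b : ldualSub φ) : A →+ B) z = (h : A →+ B) z * b := rfl

/-- Expansion of a right-dual element along a finite dual basis of `A_B`. -/
lemma rdual_expand {J : ℕ} (xb : Fin J → A) (hb : Fin J → rdualSub φ)
    (hxh : ∀ a : A, ∑ j, xb j * φ ((hb j).1 a) = a) (h : rdualSub φ) :
    ∑ j, rdualL φ ((h : A →+ B) (xb j)) (hb j) = h := by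
  apply Subtype.ext
  refine AddMonoidHom.ext fun z => ?_
  rw [addsub_sum_apply]
  conv_rhs => rw [show (h : A →+ B) z = (h : A →+ B) (∑ j, xb j * φ ((hb j).1 z)) from by
    rw [hxh z]]
  rw [map_sum]
  exact Finset.sum_congr rfl fun j _ => (h.2 (xb j) ((hb j).1 z)).symm

/-- Expansion of a left-dual element along a finite dual basis of `_B A`. -/
lemma ldual_expand {K : ℕ} (yb : Fin K → A) (gb : Fin K → ldualSub φ)
    (hyg : ∀ a : A, ∑ k, φ ((gb k).1 a) * yb k = a) (h : ldualSub φ) :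
    ∑ k, ldualR φ (gb k) ((h : A →+ B) (yb k)) = h := by
  apply Subtype.ext
  refine AddMonoidHom.ext fun z => ?_
  rw [addsub_sum_apply]
  conv_rhs => rw [show (h : A →+ B) z = (h : A →+ B) (∑ k, φ ((gb k).1 z) * yb k) from by
    rw [hyg z]]
  rw [map_sum]
  exact Finset.sum_congr rfl fun k _ => (h.2 ((gb k).1 z) (yb k)).symm

/-- Key rearrangement lemma for right duals. -/
lemma keyR {J : ℕ} (xb : Fin J → A) (hb : Fin J → rdualSub φ)
    (hxh : ∀ a : A, ∑ j, xb j * φ ((hb j).1 a) = a)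
    {C : Type} [AddCommGroup C]
    (Ψ : A → rdualSub φ → C)
    (hΨl : ∀ u u' w, Ψ (u + u') w = Ψ u w + Ψ u' w)
    (hΨr : ∀ u w w', Ψ u (w + w') = Ψ u w + Ψ u w')
    (hΨm : ∀ u b w, Ψ u (rdualL φ b w) = Ψ (u * φ b) w)
    (e : endR φ) (a : A) :
    ∑ j, Ψ ((e.1 : A →+ A) (xb j)) (rdualR φ (hb j) a)
      = ∑ t, Ψ ((e.1 : A →+ A) (a * xb t)) (hb t) := by
  have hI3 : ∀ j, rdualR φ (hb j) a
      = ∑ t, rdualL φ ((hb j).1 (a * xb t)) (hb t) := by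
    intro j
    exact (rdual_expand φ xb hb hxh (rdualR φ (hb j) a)).symm
  calc ∑ j, Ψ ((e.1 : A →+ A) (xb j)) (rdualR φ (hb j) a)
      = ∑ j, ∑ t, Ψ ((e.1 : A →+ A) (xb j)) (rdualL φ ((hb j).1 (a * xb t)) (hb t)) := by
        refine Finset.sum_congr rfl fun j _ => ?_
        rw [hI3 j]
        exact map_sum (AddMonoidHom.mk' (fun w => Ψ ((e.1 : A →+ A) (xb j)) w)
          (fun w w' => hΨr _ w w')) _ _
    _ = ∑ j, ∑ t, Ψ ((e.1 : A →+ A) (xb j) * φ ((hb j).1 (a * xb t))) (hb t) := by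
        simp only [hΨm]
    _ = ∑ t, ∑ j, Ψ ((e.1 : A →+ A) (xb j * φ ((hb j).1 (a * xb t)))) (hb t) := by
        rw [Finset.sum_comm]
        refine Finset.sum_congr rfl fun t _ => Finset.sum_congr rfl fun j _ => ?_
        rw [e.2 (xb j) ((hb j).1 (a * xb t))]
    _ = ∑ t, Ψ ((e.1 : A →+ A) (a * xb t)) (hb t) := by
        refine Finset.sum_congr rfl fun t _ => ?_
        conv_rhs => rw [← hxh (a * xb t), map_sum (e.1 : A →+ A)]
        exact (map_sum (AddMonoidHom.mk' (fun u => Ψ u (hb t))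
          (fun u u' => hΨl u u' _)) _ _).symm

/-- Key rearrangement lemma for left duals. -/
lemma keyL {K : ℕ} (yb : Fin K → A) (gb : Fin K → ldualSub φ)
    (hyg : ∀ a : A, ∑ k, φ ((gb k).1 a) * yb k = a)
    {C : Type} [AddCommGroup C]
    (Ψ : ldualSub φ → A → C)
    (hΨl : ∀ w w' u, Ψ (w + w') u = Ψ w u + Ψ w' u)
    (hΨr : ∀ w u u', Ψ w (u + u') = Ψ w u + Ψ w u')
    (hΨm : ∀ w b u, Ψ (ldualR φ w b) u = Ψ w (φ b * u))
    (e : endL φ) (a : A) :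
    ∑ k, Ψ (ldualL φ a (gb k)) ((e.1 : A →+ A) (yb k))
      = ∑ s, Ψ (gb s) ((e.1 : A →+ A) (yb s * a)) := by
  have hI4 : ∀ k, ldualL φ a (gb k)
      = ∑ s, ldualR φ (gb s) ((gb k).1 (yb s * a)) := by
    intro k
    exact (ldual_expand φ yb gb hyg (ldualL φ a (gb k))).symm
  calc ∑ k, Ψ (ldualL φ a (gb k)) ((e.1 : A →+ A) (yb k))
      = ∑ k, ∑ s, Ψ (ldualR φ (gb s) ((gb k).1 (yb s * a))) ((e.1 : A →+ A) (yb k)) := by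
        refine Finset.sum_congr rfl fun k _ => ?_
        rw [hI4 k]
        exact map_sum (AddMonoidHom.mk' (fun w => Ψ w ((e.1 : A →+ A) (yb k)))
          (fun w w' => hΨl w w' _)) _ _
    _ = ∑ k, ∑ s, Ψ (gb s) (φ ((gb k).1 (yb s * a)) * (e.1 : A →+ A) (yb k)) := by
        simp only [hΨm]
    _ = ∑ s, ∑ k, Ψ (gb s) ((e.1 : A →+ A) (φ ((gb k).1 (yb s * a)) * yb k)) := by
        rw [Finset.sum_comm]
        refine Finset.sum_congr rfl fun s _ => Finset.sum_congr rfl fun k _ => ?_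
        rw [e.2 ((gb k).1 (yb s * a)) (yb k)]
    _ = ∑ s, Ψ (gb s) ((e.1 : A →+ A) (yb s * a)) := by
        refine Finset.sum_congr rfl fun s _ => ?_
        conv_rhs => rw [← hyg (yb s * a), map_sum (e.1 : A →+ A)]
        exact (map_sum (AddMonoidHom.mk' (fun u => Ψ (gb s) u)
          (fun u u' => hΨr _ u u')) _ _).symm


section RightSide

variable {B A : Type} [Ring B] [Ring A] (φ : B →+* A)
variable {n m J K : ℕ}

/-- Component of the map `A ⊗_B A → End(A_B)^n`. -/
def cF (f : A →+ (Fin n → rdualSub φ)) (i : Fin n) (x y : A) : endR φ :=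
  ⟨(AddMonoidHom.mk' (fun z => x * φ (((f y i : rdualSub φ) : A →+ B) z))
      (fun z z' => by
        show x * φ (((f y i : rdualSub φ) : A →+ B) (z + z'))
          = x * φ (((f y i : rdualSub φ) : A →+ B) z)
            + x * φ (((f y i : rdualSub φ) : A →+ B) z')
        rw [map_add, map_add, mul_add]) : A →+ A),
   fun z b => by
      show x * φ (((f y i : rdualSub φ) : A →+ B) (z * φ b))
        = x * φ (((f y i : rdualSub φ) : A →+ B) z) * φ b
      rw [(f y i).2 z b, map_mul, mul_assoc]⟩

lemma cF_apply (f : A →+ (Fin n → rdualSub φ)) (i : Fin n) (x y z : A) :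
    ((cF φ f i x y).1 : A →+ A) z = x * φ (((f y i : rdualSub φ) : A →+ B) z) := rfl

lemma cF_add_left (f : A →+ (Fin n → rdualSub φ)) (i : Fin n) (x x' y : A) :
    cF φ f i (x + x') y = cF φ f i x y + cF φ f i x' y := by
  apply Subtype.ext
  refine AddMonoidHom.ext fun z => ?_
  show (x + x') * _ = x * _ + x' * _
  rw [add_mul]

lemma cF_add_right (f : A →+ (Fin n → rdualSub φ)) (i : Fin n) (x y y' : A) :
    cF φ f i x (y + y') = cF φ f i x y + cF φ f i x y' := by
  apply Subtype.ext
  refine AddMonoidHom.ext fun z => ?_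
  show x * φ (((f (y + y') i : rdualSub φ) : A →+ B) z) = _
  rw [map_add f]
  show x * φ ((((f y i + f y' i) : rdualSub φ) : A →+ B) z) = _
  rw [AddSubgroup.coe_add, AddMonoidHom.add_apply, map_add, mul_add]
  rfl

lemma cF_mid (f : A →+ (Fin n → rdualSub φ))
    (hf_l : ∀ (b : B) (x : A), f (φ b * x) = fun i => rdualL φ b (f x i))
    (i : Fin n) (x : A) (b : B) (y : A) :
    cF φ f i (x * φ b) y = cF φ f i x (φ b * y) := by
  apply Subtype.ext
  refine AddMonoidHom.ext fun z => ?_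
  show x * φ b * φ (((f y i : rdualSub φ) : A →+ B) z)
    = x * φ (((f (φ b * y) i : rdualSub φ) : A →+ B) z)
  rw [hf_l b y]
  show _ = x * φ (((rdualL φ b (f y i) : rdualSub φ) : A →+ B) z)
  rw [rdualL_apply, map_mul, mul_assoc]

/-- The map `A ⊗_B A → End(A_B)^n`. -/
def Fmap (f : A →+ (Fin n → rdualSub φ))
    (hf_l : ∀ (b : B) (x : A), f (φ b * x) = fun i => rdualL φ b (f x i)) :
    TensorSq φ →+ (Fin n → endR φ) :=
  AddMonoidHom.mk'
    (fun t i => mkT φ (fun x y => cF φ f i x y) (cF_add_left φ f i) (cF_add_right φ f i)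
      (cF_mid φ f hf_l i) t)
    (fun s t => funext fun i => map_add _ s t)

lemma Fmap_tmk (f : A →+ (Fin n → rdualSub φ))
    (hf_l : ∀ (b : B) (x : A), f (φ b * x) = fun i => rdualL φ b (f x i)) (x y : A) :
    Fmap φ f hf_l (tmk φ x y) = fun i => cF φ f i x y :=
  funext fun i => by
    show mkT φ (fun x y => cF φ f i x y) (cF_add_left φ f i) (cF_add_right φ f i)
      (cF_mid φ f hf_l i) (tmk φ x y) = cF φ f i x y
    exact mkT_tmk φ _ _ _ _ x y

/-- The map `End(A_B)^n → A ⊗_B A`. -/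
def Gmap (g : (Fin n → rdualSub φ) →+ A) (xb : Fin J → A) (hb : Fin J → rdualSub φ) :
    (Fin n → endR φ) →+ TensorSq φ :=
  AddMonoidHom.mk'
    (fun v => ∑ j, ∑ i, tmk φ (((v i).1 : A →+ A) (xb j)) (g (Pi.single i (hb j))))
    (fun v w => by
      rw [← Finset.sum_add_distrib]
      refine Finset.sum_congr rfl fun j _ => ?_
      rw [← Finset.sum_add_distrib]
      refine Finset.sum_congr rfl fun i _ => ?_
      have : (((v + w) i).1 : A →+ A) (xb j)
          = ((v i).1 : A →+ A) (xb j) + ((w i).1 : A →+ A) (xb j) := rfl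
      rw [this, tmk_add_left])

lemma Gmap_apply (g : (Fin n → rdualSub φ) →+ A) (xb : Fin J → A) (hb : Fin J → rdualSub φ)
    (v : Fin n → endR φ) :
    Gmap φ g xb hb v
      = ∑ j, ∑ i, tmk φ (((v i).1 : A →+ A) (xb j)) (g (Pi.single i (hb j))) := rfl

/-- The derived map `(A_B)^* → A^m`. -/
def pmap (g' : (Fin m → ldualSub φ) →+ A) (yb : Fin K → A) (gb : Fin K → ldualSub φ)
    (h : rdualSub φ) (k : Fin m) : A :=
  ∑ j, φ ((h : A →+ B) (g' (Pi.single k (gb j)))) * yb j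

lemma pmap_add (g' : (Fin m → ldualSub φ) →+ A) (yb : Fin K → A) (gb : Fin K → ldualSub φ)
    (h h' : rdualSub φ) (k : Fin m) :
    pmap φ g' yb gb (h + h') k = pmap φ g' yb gb h k + pmap φ g' yb gb h' k := by
  unfold pmap
  rw [← Finset.sum_add_distrib]
  refine Finset.sum_congr rfl fun j _ => ?_
  show φ ((((h : A →+ B) + (h' : A →+ B))) _) * _ = _
  rw [AddMonoidHom.add_apply, map_add, add_mul]

/-- The derived map `A^m → (A_B)^*`. -/
def qmap (f' : A →+ (Fin m → ldualSub φ))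
    (hf'_r : ∀ (x : A) (b : B), f' (x * φ b) = fun i => ldualR φ (f' x i) b)
    (v : Fin m → A) : rdualSub φ :=
  ⟨AddMonoidHom.mk' (fun a => ∑ k, ((f' a k : ldualSub φ) : A →+ B) (v k))
      (fun a a' => by
        rw [← Finset.sum_add_distrib]
        refine Finset.sum_congr rfl fun k _ => ?_
        rw [map_add f']
        show (((f' a k + f' a' k) : ldualSub φ) : A →+ B) (v k) = _
        rw [AddSubgroup.coe_add, AddMonoidHom.add_apply]),
   fun x b => by
      show ∑ k, ((f' (x * φ b) k : ldualSub φ) : A →+ B) (v k)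
        = (∑ k, ((f' x k : ldualSub φ) : A →+ B) (v k)) * b
      rw [hf'_r x b, Finset.sum_mul]
      exact Finset.sum_congr rfl fun k _ => rfl⟩

lemma qmap_apply (f' : A →+ (Fin m → ldualSub φ))
    (hf'_r : ∀ (x : A) (b : B), f' (x * φ b) = fun i => ldualR φ (f' x i) b)
    (v : Fin m → A) (a : A) :
    ((qmap φ f' hf'_r v : rdualSub φ) : A →+ B) a
      = ∑ k, ((f' a k : ldualSub φ) : A →+ B) (v k) := rfl

lemma qmap_add (f' : A →+ (Fin m → ldualSub φ))
    (hf'_r : ∀ (x : A) (b : B), f' (x * φ b) = fun i => ldualR φ (f' x i) b)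
    (v w : Fin m → A) :
    qmap φ f' hf'_r (v + w) = qmap φ f' hf'_r v + qmap φ f' hf'_r w := by
  apply Subtype.ext
  refine AddMonoidHom.ext fun a => ?_
  show ∑ k, ((f' a k : ldualSub φ) : A →+ B) (v k + w k) = _
  rw [show ((((qmap φ f' hf'_r v + qmap φ f' hf'_r w) : rdualSub φ)) : A →+ B) a
    = ∑ k, ((f' a k : ldualSub φ) : A →+ B) (v k) + ∑ k, ((f' a k : ldualSub φ) : A →+ B) (w k)
    from rfl, ← Finset.sum_add_distrib]
  exact Finset.sum_congr rfl fun k _ => map_add _ _ _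

/-- Bundled `qmap`. -/
def qhom (f' : A →+ (Fin m → ldualSub φ))
    (hf'_r : ∀ (x : A) (b : B), f' (x * φ b) = fun i => ldualR φ (f' x i) b) :
    (Fin m → A) →+ rdualSub φ :=
  AddMonoidHom.mk' (qmap φ f' hf'_r) (qmap_add φ f' hf'_r)

end RightSide

section DerivedDiv

variable {B A : Type} [Ring B] [Ring A] (φ : B →+* A)
variable {n m J K : ℕ}

lemma q_rdualL (f' : A →+ (Fin m → ldualSub φ))
    (hf'_r : ∀ (x : A) (b : B), f' (x * φ b) = fun i => ldualR φ (f' x i) b)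
    (b : B) (v : Fin m → A) :
    qmap φ f' hf'_r (fun k => φ b * v k) = rdualL φ b (qmap φ f' hf'_r v) := by
  apply Subtype.ext
  refine AddMonoidHom.ext fun a => ?_
  rw [qmap_apply, rdualL_apply, qmap_apply, Finset.mul_sum]
  exact Finset.sum_congr rfl fun k _ => (f' a k).2 b (v k)

lemma q_rdualR (f' : A →+ (Fin m → ldualSub φ))
    (hf'_r : ∀ (x : A) (b : B), f' (x * φ b) = fun i => ldualR φ (f' x i) b)
    (hf'_l : ∀ (a x : A), f' (a * x) = fun i => ldualL φ a (f' x i))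
    (v : Fin m → A) (a : A) :
    qmap φ f' hf'_r (fun k => v k * a) = rdualR φ (qmap φ f' hf'_r v) a := by
  apply Subtype.ext
  refine AddMonoidHom.ext fun z => ?_
  rw [qmap_apply, rdualR_apply, qmap_apply]
  conv_rhs => rw [show (∑ k, ((f' (a * z) k : ldualSub φ) : A →+ B) (v k))
    = ∑ k, ((ldualL φ a (f' z k) : ldualSub φ) : A →+ B) (v k) from by rw [hf'_l a z]]
  rfl

lemma g'_single_ldualL (g' : (Fin m → ldualSub φ) →+ A)
    (hg'_l : ∀ (a : A) (v : Fin m → ldualSub φ),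
      g' (fun i => ldualL φ a (v i)) = a * g' v)
    (a : A) (k : Fin m) (w : ldualSub φ) :
    g' (Pi.single k (ldualL φ a w)) = a * g' (Pi.single k w) := by
  rw [← hg'_l a (Pi.single k w)]
  congr 1
  exact (single_map (ldualL φ a) (ldualL_zero φ a) k w).symm

lemma g'_single_ldualR (g' : (Fin m → ldualSub φ) →+ A)
    (hg'_r : ∀ (v : Fin m → ldualSub φ) (b : B),
      g' (fun i => ldualR φ (v i) b) = g' v * φ b)
    (k : Fin m) (w : ldualSub φ) (b : B) :
    g' (Pi.single k (ldualR φ w b)) = g' (Pi.single k w) * φ b := by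
  rw [← hg'_r (Pi.single k w) b]
  congr 1
  exact (single_map (fun u => ldualR φ u b) (ldualR_zero φ b) k w).symm

lemma p_rdualL (g' : (Fin m → ldualSub φ) →+ A) (yb : Fin K → A) (gb : Fin K → ldualSub φ)
    (b : B) (h : rdualSub φ) :
    pmap φ g' yb gb (rdualL φ b h) = fun k => φ b * pmap φ g' yb gb h k := by
  funext k
  unfold pmap
  rw [Finset.mul_sum]
  refine Finset.sum_congr rfl fun j _ => ?_
  rw [rdualL_apply, map_mul, mul_assoc]

lemma p_rdualR (g' : (Fin m → ldualSub φ) →+ A) (yb : Fin K → A) (gb : Fin K → ldualSub φ)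
    (hg'_l : ∀ (a : A) (v : Fin m → ldualSub φ),
      g' (fun i => ldualL φ a (v i)) = a * g' v)
    (hg'_r : ∀ (v : Fin m → ldualSub φ) (b : B),
      g' (fun i => ldualR φ (v i) b) = g' v * φ b)
    (hyg : ∀ a : A, ∑ t, φ ((gb t).1 a) * yb t = a)
    (h : rdualSub φ) (a : A) :
    pmap φ g' yb gb (rdualR φ h a) = fun k => pmap φ g' yb gb h k * a := by
  funext k
  unfold pmap
  calc ∑ j, φ (((rdualR φ h a : rdualSub φ) : A →+ B) (g' (Pi.single k (gb j)))) * yb j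
      = ∑ j, φ ((h : A →+ B) (g' (Pi.single k (ldualL φ a (gb j))))) * yb j := by
        refine Finset.sum_congr rfl fun j _ => ?_
        rw [rdualR_apply, g'_single_ldualL φ g' hg'_l]
    _ = ∑ j, ∑ t, φ ((h : A →+ B) (g' (Pi.single k (gb t)))
          * ((gb j) : A →+ B) (yb t * a)) * yb j := by
        refine Finset.sum_congr rfl fun j _ => ?_
        conv_lhs => rw [← ldual_expand φ yb gb hyg (ldualL φ a (gb j))]
        have : ∀ t, ((ldualL φ a (gb j) : ldualSub φ) : A →+ B) (yb t)
            = ((gb j) : A →+ B) (yb t * a) := fun t => rfl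
        simp only [this]
        rw [single_sum, map_sum g', map_sum (h : A →+ B), map_sum φ, Finset.sum_mul]
        refine Finset.sum_congr rfl fun t _ => ?_
        rw [g'_single_ldualR φ g' hg'_r, ← h.2]
    _ = ∑ t, φ ((h : A →+ B) (g' (Pi.single k (gb t))))
          * ∑ j, φ (((gb j) : A →+ B) (yb t * a)) * yb j := by
        rw [Finset.sum_comm]
        refine Finset.sum_congr rfl fun t _ => ?_
        rw [Finset.mul_sum]
        refine Finset.sum_congr rfl fun j _ => ?_
        rw [map_mul, mul_assoc]
    _ = (∑ t, φ ((h : A →+ B) (g' (Pi.single k (gb t)))) * yb t) * a := by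
        rw [Finset.sum_mul]
        refine Finset.sum_congr rfl fun t _ => ?_
        rw [hyg (yb t * a), mul_assoc]

lemma qp_eq (f' : A →+ (Fin m → ldualSub φ)) (g' : (Fin m → ldualSub φ) →+ A)
    (hf'_r : ∀ (x : A) (b : B), f' (x * φ b) = fun i => ldualR φ (f' x i) b)
    (hg'_r : ∀ (v : Fin m → ldualSub φ) (b : B),
      g' (fun i => ldualR φ (v i) b) = g' v * φ b)
    (hg'f : ∀ x : A, g' (f' x) = x)
    (yb : Fin K → A) (gb : Fin K → ldualSub φ)
    (hyg : ∀ a : A, ∑ t, φ ((gb t).1 a) * yb t = a)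
    (h : rdualSub φ) :
    qmap φ f' hf'_r (pmap φ g' yb gb h) = h := by
  apply Subtype.ext
  refine AddMonoidHom.ext fun a => ?_
  rw [qmap_apply]
  calc ∑ k, ((f' a k : ldualSub φ) : A →+ B) (pmap φ g' yb gb h k)
      = ∑ k, ∑ j, ((h : A →+ B) (g' (Pi.single k (gb j))))
          * ((f' a k : ldualSub φ) : A →+ B) (yb j) := by
        refine Finset.sum_congr rfl fun k _ => ?_
        unfold pmap
        rw [map_sum]
        exact Finset.sum_congr rfl fun j _ => (f' a k).2 _ (yb j)
    _ = ∑ k, ∑ j, (h : A →+ B) (g' (Pi.single k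
          (ldualR φ (gb j) (((f' a k : ldualSub φ) : A →+ B) (yb j))))) := by
        refine Finset.sum_congr rfl fun k _ => Finset.sum_congr rfl fun j _ => ?_
        rw [g'_single_ldualR φ g' hg'_r, h.2]
    _ = ∑ k, (h : A →+ B) (g' (Pi.single k (f' a k))) := by
        refine Finset.sum_congr rfl fun k _ => ?_
        conv_rhs => rw [← ldual_expand φ yb gb hyg (f' a k), single_sum,
          map_sum g', map_sum (h : A →+ B)]
    _ = (h : A →+ B) a := by
        conv_rhs => rw [← hg'f a, ← Finset.univ_sum_single (f' a),
          map_sum g', map_sum (h : A →+ B)]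

end DerivedDiv

section EndRMaps

variable {B A : Type} [Ring B] [Ring A] (φ : B →+* A)
variable {n m J K : ℕ}

/-- Component of the map `A ⊗_B A → End(A_B)` used in `Qmap`. -/
def dQ (f' : A →+ (Fin m → ldualSub φ))
    (hf'_r : ∀ (x : A) (b : B), f' (x * φ b) = fun i => ldualR φ (f' x i) b)
    (k : Fin m) (x y : A) : endR φ :=
  ⟨(AddMonoidHom.mk'
      (fun z => x * φ (((qmap φ f' hf'_r (Pi.single k y) : rdualSub φ) : A →+ B) z))
      (fun z z' => by
        show x * φ (((qmap φ f' hf'_r (Pi.single k y) : rdualSub φ) : A →+ B) (z + z')) = _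
        rw [map_add, map_add, mul_add]) : A →+ A),
   fun z b => by
      show x * φ (((qmap φ f' hf'_r (Pi.single k y) : rdualSub φ) : A →+ B) (z * φ b))
        = x * φ (((qmap φ f' hf'_r (Pi.single k y) : rdualSub φ) : A →+ B) z) * φ b
      rw [(qmap φ f' hf'_r (Pi.single k y)).2 z b, map_mul, mul_assoc]⟩

lemma dQ_apply (f' : A →+ (Fin m → ldualSub φ))
    (hf'_r : ∀ (x : A) (b : B), f' (x * φ b) = fun i => ldualR φ (f' x i) b)
    (k : Fin m) (x y z : A) :
    ((dQ φ f' hf'_r k x y).1 : A →+ A) z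
      = x * φ (((qmap φ f' hf'_r (Pi.single k y) : rdualSub φ) : A →+ B) z) := rfl

lemma dQ_add_left (f' : A →+ (Fin m → ldualSub φ)) (hf'_r) (k : Fin m) (x x' y : A) :
    dQ φ f' hf'_r k (x + x') y = dQ φ f' hf'_r k x y + dQ φ f' hf'_r k x' y := by
  apply Subtype.ext
  refine AddMonoidHom.ext fun z => ?_
  show (x + x') * _ = x * _ + x' * _
  rw [add_mul]

lemma dQ_add_right (f' : A →+ (Fin m → ldualSub φ)) (hf'_r) (k : Fin m) (x y y' : A) :
    dQ φ f' hf'_r k x (y + y') = dQ φ f' hf'_r k x y + dQ φ f' hf'_r k x y' := by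
  apply Subtype.ext
  refine AddMonoidHom.ext fun z => ?_
  show x * φ (((qmap φ f' hf'_r (Pi.single k (y + y')) : rdualSub φ) : A →+ B) z) = _
  rw [show (Pi.single k (y + y') : Fin m → A) = Pi.single k y + Pi.single k y' from
    Pi.single_add (f := fun _ : Fin m => A) k y y', qmap_add]
  show x * φ ((((qmap φ f' hf'_r (Pi.single k y) + qmap φ f' hf'_r (Pi.single k y'))
    : rdualSub φ) : A →+ B) z) = _
  rw [AddSubgroup.coe_add, AddMonoidHom.add_apply, map_add, mul_add]
  rfl

lemma dQ_mid (f' : A →+ (Fin m → ldualSub φ)) (hf'_r) (k : Fin m) (x : A) (b : B) (y : A) :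
    dQ φ f' hf'_r k (x * φ b) y = dQ φ f' hf'_r k x (φ b * y) := by
  apply Subtype.ext
  refine AddMonoidHom.ext fun z => ?_
  show x * φ b * φ (((qmap φ f' hf'_r (Pi.single k y) : rdualSub φ) : A →+ B) z)
    = x * φ (((qmap φ f' hf'_r (Pi.single k (φ b * y)) : rdualSub φ) : A →+ B) z)
  rw [show (Pi.single k (φ b * y) : Fin m → A) = fun i => φ b * (Pi.single k y : Fin m → A) i
    from (single_map (fun u => φ b * u) (mul_zero (φ b)) k y).symm,
    q_rdualL φ f' hf'_r, rdualL_apply, map_mul, mul_assoc]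

/-- The map `End(A_B) → (A ⊗_B A)^m`. -/
def Pmap (g' : (Fin m → ldualSub φ) →+ A) (yb : Fin K → A) (gb : Fin K → ldualSub φ)
    (xb : Fin J → A) (hb : Fin J → rdualSub φ) : endR φ →+ (Fin m → TensorSq φ) :=
  AddMonoidHom.mk'
    (fun e k => ∑ j, tmk φ ((e.1 : A →+ A) (xb j)) (pmap φ g' yb gb (hb j) k))
    (fun e e' => by
      funext k
      show ∑ j, tmk φ (((e + e').1 : A →+ A) (xb j)) _ = _
      rw [show ((fun k => ∑ j, tmk φ ((e.1 : A →+ A) (xb j)) (pmap φ g' yb gb (hb j) k)) +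
        fun k => ∑ j, tmk φ (((e').1 : A →+ A) (xb j)) (pmap φ g' yb gb (hb j) k)) k
        = ∑ j, tmk φ ((e.1 : A →+ A) (xb j)) (pmap φ g' yb gb (hb j) k)
          + ∑ j, tmk φ (((e').1 : A →+ A) (xb j)) (pmap φ g' yb gb (hb j) k) from rfl,
        ← Finset.sum_add_distrib]
      refine Finset.sum_congr rfl fun j _ => ?_
      rw [show (((e + e').1 : A →+ A)) (xb j)
        = (e.1 : A →+ A) (xb j) + ((e').1 : A →+ A) (xb j) from rfl, tmk_add_left])

lemma Pmap_apply (g' : (Fin m → ldualSub φ) →+ A) (yb : Fin K → A) (gb : Fin K → ldualSub φ)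
    (xb : Fin J → A) (hb : Fin J → rdualSub φ) (e : endR φ) (k : Fin m) :
    Pmap φ g' yb gb xb hb e k
      = ∑ j, tmk φ ((e.1 : A →+ A) (xb j)) (pmap φ g' yb gb (hb j) k) := rfl

/-- The map `(A ⊗_B A)^m → End(A_B)`. -/
def Qmap (f' : A →+ (Fin m → ldualSub φ))
    (hf'_r : ∀ (x : A) (b : B), f' (x * φ b) = fun i => ldualR φ (f' x i) b) :
    (Fin m → TensorSq φ) →+ endR φ :=
  AddMonoidHom.mk'
    (fun t => ∑ k, mkT φ (fun x y => dQ φ f' hf'_r k x y) (dQ_add_left φ f' hf'_r k)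
      (dQ_add_right φ f' hf'_r k) (dQ_mid φ f' hf'_r k) (t k))
    (fun t t' => by
      rw [← Finset.sum_add_distrib]
      refine Finset.sum_congr rfl fun k _ => ?_
      rw [show (t + t') k = t k + t' k from rfl, map_add])

lemma Qmap_apply (f' : A →+ (Fin m → ldualSub φ))
    (hf'_r : ∀ (x : A) (b : B), f' (x * φ b) = fun i => ldualR φ (f' x i) b)
    (t : Fin m → TensorSq φ) :
    Qmap φ f' hf'_r t = ∑ k, mkT φ (fun x y => dQ φ f' hf'_r k x y)
      (dQ_add_left φ f' hf'_r k) (dQ_add_right φ f' hf'_r k) (dQ_mid φ f' hf'_r k) (t k) := rfl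

end EndRMaps

section BDivEndR

variable {B A : Type} [Ring B] [Ring A] (φ : B →+* A)
variable {n m J K : ℕ}

/-- `tmk` bundled in its second argument. -/
def tmkR (x : A) : A →+ TensorSq φ := AddMonoidHom.mk' (tmk φ x) (tmk_add_right φ x)

lemma tmk_sum (x : A) {ι : Type} (s : Finset ι) (w : ι → A) :
    tmk φ x (∑ i ∈ s, w i) = ∑ i ∈ s, tmk φ x (w i) :=
  map_sum (tmkR φ x) _ _

lemma tmk_suml (y : A) {ι : Type} (s : Finset ι) (w : ι → A) :
    tmk φ (∑ i ∈ s, w i) y = ∑ i ∈ s, tmk φ (w i) y :=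
  map_sum (AddMonoidHom.mk' (fun x => tmk φ x y) (fun x x' => tmk_add_left φ x x' y)) _ _

lemma bdiv_T_endR
    (f : A →+ (Fin n → rdualSub φ)) (g : (Fin n → rdualSub φ) →+ A)
    (hf_l : ∀ (b : B) (x : A), f (φ b * x) = fun i => rdualL φ b (f x i))
    (hf_r : ∀ (x a : A), f (x * a) = fun i => rdualR φ (f x i) a)
    (hg_l : ∀ (b : B) (v : Fin n → rdualSub φ), g (fun i => rdualL φ b (v i)) = φ b * g v)
    (hg_r : ∀ (v : Fin n → rdualSub φ) (a : A), g (fun i => rdualR φ (v i) a) = g v * a)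
    (hgf : ∀ x : A, g (f x) = x)
    (xb : Fin J → A) (hb : Fin J → rdualSub φ)
    (hxh : ∀ a : A, ∑ j, xb j * φ ((hb j).1 a) = a) :
    BDiv (↥(endR φ)) A (fun e t => endRTmulL φ e t) (fun t a => tR φ a t)
      (fun e f => e * f) (fun f a => f * lam φ a) := by
  have g_single_rdualL : ∀ (b : B) (i : Fin n) (w : rdualSub φ),
      g (Pi.single i (rdualL φ b w)) = φ b * g (Pi.single i w) := by
    intro b i w
    rw [← hg_l b (Pi.single i w)]
    congr 1
    exact (single_map (rdualL φ b) (rdualL_zero φ b) i w).symm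
  have g_single_rdualR : ∀ (i : Fin n) (w : rdualSub φ) (a : A),
      g (Pi.single i (rdualR φ w a)) = g (Pi.single i w) * a := by
    intro i w a
    rw [← hg_r (Pi.single i w) a]
    congr 1
    exact (single_map (fun u => rdualR φ u a) (rdualR_zero φ a) i w).symm
  have hΨl : ∀ (i : Fin n) (u u' : A) (w : rdualSub φ),
      tmk φ (u + u') (g (Pi.single i w)) = tmk φ u (g (Pi.single i w))
        + tmk φ u' (g (Pi.single i w)) := fun i u u' w => tmk_add_left φ u u' _
  have hΨr : ∀ (i : Fin n) (u : A) (w w' : rdualSub φ),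
      tmk φ u (g (Pi.single i (w + w'))) = tmk φ u (g (Pi.single i w))
        + tmk φ u (g (Pi.single i w')) := by
    intro i u w w'
    rw [show (Pi.single i (w + w') : Fin n → rdualSub φ) = Pi.single i w + Pi.single i w'
      from Pi.single_add (f := fun _ : Fin n => (rdualSub φ : AddSubgroup (A →+ B))) i w w',
      map_add, tmk_add_right]
  have hΨm : ∀ (i : Fin n) (u : A) (b : B) (w : rdualSub φ),
      tmk φ u (g (Pi.single i (rdualL φ b w))) = tmk φ (u * φ b) (g (Pi.single i w)) := by
    intro i u b w
    rw [g_single_rdualL, ← tmk_rel]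
  refine ⟨n, Fmap φ f hf_l, Gmap φ g xb hb, ?_, ?_, ?_, ?_, ?_⟩
  · intro e t
    refine TensorSq.ind φ (p := fun t => Fmap φ f hf_l (endRTmulL φ e t)
      = fun i => e * Fmap φ f hf_l t i) ?_ ?_ ?_ t
    · beta_reduce
      rw [map_zero, map_zero]
      funext i
      simp
    · intro s t hs ht
      beta_reduce
      beta_reduce at hs ht
      rw [map_add, map_add, hs, ht]
      funext i
      simp [mul_add]
    · intro x y
      beta_reduce
      rw [endRTmulL_tmk, Fmap_tmk, Fmap_tmk]
      funext i
      apply Subtype.ext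
      refine AddMonoidHom.ext fun z => ?_
      exact (e.2 x (((f y i : rdualSub φ) : A →+ B) z)).symm
  · intro t a
    refine TensorSq.ind φ (p := fun t => Fmap φ f hf_l (tR φ a t)
      = fun i => Fmap φ f hf_l t i * lam φ a) ?_ ?_ ?_ t
    · beta_reduce
      rw [map_zero, map_zero]
      funext i
      simp
    · intro s t hs ht
      beta_reduce
      beta_reduce at hs ht
      rw [map_add, map_add, hs, ht]
      funext i
      simp [add_mul]
    · intro x y
      beta_reduce
      rw [tR_tmk, Fmap_tmk, Fmap_tmk]
      funext i
      apply Subtype.ext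
      refine AddMonoidHom.ext fun z => ?_
      show x * φ (((f (y * a) i : rdualSub φ) : A →+ B) z)
        = x * φ (((f y i : rdualSub φ) : A →+ B) (a * z))
      rw [hf_r y a]
      rfl
  · intro e v
    beta_reduce
    rw [Gmap_apply, Gmap_apply, map_sum (endRTmulL φ e)]
    refine Finset.sum_congr rfl fun j _ => ?_
    rw [map_sum (endRTmulL φ e)]
    refine Finset.sum_congr rfl fun i _ => ?_
    rw [endRTmulL_tmk]
    rfl
  · intro v a
    beta_reduce
    have expand_tR : tR φ a (Gmap φ g xb hb v)
        = ∑ i, ∑ j, tmk φ (((v i).1 : A →+ A) (xb j))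
            (g (Pi.single i (rdualR φ (hb j) a))) := by
      rw [Gmap_apply, map_sum (tR φ a)]
      simp only [map_sum, tR_tmk]
      simp only [← g_single_rdualR]
      rw [Finset.sum_comm]
    rw [expand_tR, Gmap_apply, Finset.sum_comm]
    refine Finset.sum_congr rfl fun i _ => ?_
    exact (keyR φ xb hb hxh (fun u w => tmk φ u (g (Pi.single i w)))
      (hΨl i) (hΨr i) (hΨm i) (v i) a).symm
  · intro t
    refine TensorSq.ind φ (p := fun t => Gmap φ g xb hb (Fmap φ f hf_l t) = t) ?_ ?_ ?_ t
    · beta_reduce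
      rw [map_zero, map_zero]
    · intro s t hs ht
      beta_reduce
      beta_reduce at hs ht
      rw [map_add, map_add, hs, ht]
    · intro x y
      beta_reduce
      rw [Fmap_tmk, Gmap_apply]
      calc ∑ j, ∑ i, tmk φ (((cF φ f i x y).1 : A →+ A) (xb j)) (g (Pi.single i (hb j)))
          = ∑ i, ∑ j, tmk φ x (g (Pi.single i
              (rdualL φ (((f y i : rdualSub φ) : A →+ B) (xb j)) (hb j)))) := by
            rw [Finset.sum_comm]
            refine Finset.sum_congr rfl fun i _ => Finset.sum_congr rfl fun j _ => ?_
            rw [cF_apply, tmk_rel, ← g_single_rdualL]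
        _ = ∑ i, tmk φ x (g (Pi.single i (f y i))) := by
            refine Finset.sum_congr rfl fun i _ => ?_
            conv_rhs => rw [← rdual_expand φ xb hb hxh (f y i), single_sum, map_sum g,
              tmk_sum]
        _ = tmk φ x y := by
            conv_rhs => rw [← hgf y, ← Finset.univ_sum_single (f y), map_sum g,
              tmk_sum]


lemma bdiv_endR_T
    (f' : A →+ (Fin m → ldualSub φ)) (g' : (Fin m → ldualSub φ) →+ A)
    (hf'_l : ∀ (a x : A), f' (a * x) = fun i => ldualL φ a (f' x i))
    (hf'_r : ∀ (x : A) (b : B), f' (x * φ b) = fun i => ldualR φ (f' x i) b)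
    (hg'_l : ∀ (a : A) (v : Fin m → ldualSub φ), g' (fun i => ldualL φ a (v i)) = a * g' v)
    (hg'_r : ∀ (v : Fin m → ldualSub φ) (b : B), g' (fun i => ldualR φ (v i) b) = g' v * φ b)
    (hg'f : ∀ x : A, g' (f' x) = x)
    (yb : Fin K → A) (gb : Fin K → ldualSub φ)
    (hyg : ∀ a : A, ∑ t, φ ((gb t).1 a) * yb t = a)
    (xb : Fin J → A) (hb : Fin J → rdualSub φ)
    (hxh : ∀ a : A, ∑ j, xb j * φ ((hb j).1 a) = a) :
    BDiv (↥(endR φ)) A (fun e f => e * f) (fun f a => f * lam φ a)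
      (fun e t => endRTmulL φ e t) (fun t a => tR φ a t) := by
  have hΨl : ∀ (k : Fin m) (u u' : A) (w : rdualSub φ),
      tmk φ (u + u') (pmap φ g' yb gb w k)
        = tmk φ u (pmap φ g' yb gb w k) + tmk φ u' (pmap φ g' yb gb w k) :=
    fun k u u' w => tmk_add_left φ u u' _
  have hΨr : ∀ (k : Fin m) (u : A) (w w' : rdualSub φ),
      tmk φ u (pmap φ g' yb gb (w + w') k)
        = tmk φ u (pmap φ g' yb gb w k) + tmk φ u (pmap φ g' yb gb w' k) := by
    intro k u w w'
    rw [pmap_add, tmk_add_right]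
  have hΨm : ∀ (k : Fin m) (u : A) (b : B) (w : rdualSub φ),
      tmk φ u (pmap φ g' yb gb (rdualL φ b w) k)
        = tmk φ (u * φ b) (pmap φ g' yb gb w k) := by
    intro k u b w
    rw [p_rdualL, ← tmk_rel]
  refine ⟨m, Pmap φ g' yb gb xb hb, Qmap φ f' hf'_r, ?_, ?_, ?_, ?_, ?_⟩
  · intro e' e
    beta_reduce
    funext k
    rw [show Pmap φ g' yb gb xb hb (e' * e) k
      = ∑ j, tmk φ (((e' * e).1 : A →+ A) (xb j)) (pmap φ g' yb gb (hb j) k)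
      from rfl, Pmap_apply, map_sum (endRTmulL φ e')]
    refine Finset.sum_congr rfl fun j _ => ?_
    rw [endRTmulL_tmk]
    rfl
  · intro e a
    beta_reduce
    funext k
    calc Pmap φ g' yb gb xb hb (e * lam φ a) k
        = ∑ j, tmk φ ((e.1 : A →+ A) (xb j)) (pmap φ g' yb gb (rdualR φ (hb j) a) k) :=
          (keyR φ xb hb hxh (fun u w => tmk φ u (pmap φ g' yb gb w k))
            (hΨl k) (hΨr k) (hΨm k) e a).symm
      _ = tR φ a (Pmap φ g' yb gb xb hb e k) := by
          rw [Pmap_apply, map_sum (tR φ a)]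
          refine Finset.sum_congr rfl fun j _ => ?_
          rw [tR_tmk, p_rdualR φ g' yb gb hg'_l hg'_r hyg]
  · intro e t
    beta_reduce
    rw [Qmap_apply, Qmap_apply, Finset.mul_sum]
    refine Finset.sum_congr rfl fun k _ => ?_
    refine TensorSq.ind φ (p := fun s => mkT φ (fun x y => dQ φ f' hf'_r k x y)
      (dQ_add_left φ f' hf'_r k) (dQ_add_right φ f' hf'_r k) (dQ_mid φ f' hf'_r k)
      (endRTmulL φ e s)
      = e * mkT φ (fun x y => dQ φ f' hf'_r k x y) (dQ_add_left φ f' hf'_r k)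
        (dQ_add_right φ f' hf'_r k) (dQ_mid φ f' hf'_r k) s) ?_ ?_ ?_ (t k)
    · beta_reduce
      rw [map_zero, map_zero, mul_zero]
    · intro s s' hs hs'
      beta_reduce
      beta_reduce at hs hs'
      rw [map_add, map_add, map_add, hs, hs', mul_add]
    · intro x y
      beta_reduce
      rw [endRTmulL_tmk, mkT_tmk, mkT_tmk]
      apply Subtype.ext
      refine AddMonoidHom.ext fun z => ?_
      exact (e.2 x (((qmap φ f' hf'_r (Pi.single k y) : rdualSub φ) : A →+ B) z)).symm
  · intro t a
    beta_reduce
    rw [Qmap_apply, Qmap_apply, Finset.sum_mul]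
    refine Finset.sum_congr rfl fun k _ => ?_
    refine TensorSq.ind φ (p := fun s => mkT φ (fun x y => dQ φ f' hf'_r k x y)
      (dQ_add_left φ f' hf'_r k) (dQ_add_right φ f' hf'_r k) (dQ_mid φ f' hf'_r k)
      (tR φ a s)
      = mkT φ (fun x y => dQ φ f' hf'_r k x y) (dQ_add_left φ f' hf'_r k)
        (dQ_add_right φ f' hf'_r k) (dQ_mid φ f' hf'_r k) s * lam φ a) ?_ ?_ ?_ (t k)
    · beta_reduce
      rw [map_zero, map_zero, zero_mul]
    · intro s s' hs hs'
      beta_reduce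
      beta_reduce at hs hs'
      rw [map_add, map_add, map_add, hs, hs', add_mul]
    · intro x y
      beta_reduce
      rw [tR_tmk, mkT_tmk, mkT_tmk]
      apply Subtype.ext
      refine AddMonoidHom.ext fun z => ?_
      show x * φ (((qmap φ f' hf'_r (Pi.single k (y * a)) : rdualSub φ) : A →+ B) z)
        = x * φ (((qmap φ f' hf'_r (Pi.single k y) : rdualSub φ) : A →+ B) (a * z))
      rw [show (Pi.single k (y * a) : Fin m → A)
          = fun i => (Pi.single k y : Fin m → A) i * a
        from (single_map (fun u => u * a) (zero_mul a) k y).symm,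
        q_rdualR φ f' hf'_r hf'_l, rdualR_apply]
  · intro e
    apply Subtype.ext
    refine AddMonoidHom.ext fun z => ?_
    have lhs_eq : ((Qmap φ f' hf'_r (Pmap φ g' yb gb xb hb e) : endR φ)
        : AddMonoid.End A) z
        = ∑ k, ∑ j, (e.1 : A →+ A) (xb j)
            * φ (((qmap φ f' hf'_r (Pi.single k (pmap φ g' yb gb (hb j) k))
                : rdualSub φ) : A →+ B) z) := by
      rw [Qmap_apply, endsub_sum_apply]
      refine Finset.sum_congr rfl fun k _ => ?_
      rw [show Pmap φ g' yb gb xb hb e k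
        = ∑ j, tmk φ ((e.1 : A →+ A) (xb j)) (pmap φ g' yb gb (hb j) k) from rfl,
        map_sum (mkT φ (fun x y => dQ φ f' hf'_r k x y) (dQ_add_left φ f' hf'_r k)
          (dQ_add_right φ f' hf'_r k) (dQ_mid φ f' hf'_r k)), endsub_sum_apply]
      refine Finset.sum_congr rfl fun j _ => ?_
      rw [mkT_tmk]
      rfl
    refine lhs_eq.trans ?_
    rw [Finset.sum_comm]
    conv_rhs => rw [← hxh z,
      map_sum (G := A →+ A) (e.1 : A →+ A)]
    have qmap_sum : ∀ (v0 : Fin m → A),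
        (∑ k, qmap φ f' hf'_r (Pi.single k (v0 k))) = qmap φ f' hf'_r v0 := by
      intro v0
      have h := map_sum (qhom φ f' hf'_r) (fun k => (Pi.single k (v0 k) : Fin m → A))
        Finset.univ
      rw [Finset.univ_sum_single] at h
      exact h.symm
    refine Finset.sum_congr rfl fun j _ => ?_
    erw [e.2 (xb j) (((hb j) : A →+ B) z)]
    have h3 : ((hb j : rdualSub φ) : A →+ B) z
        = ∑ k, ((qmap φ f' hf'_r (Pi.single k (pmap φ g' yb gb (hb j) k))
            : rdualSub φ) : A →+ B) z := by
      conv_lhs => rw [← qp_eq φ f' g' hf'_r hg'_r hg'f yb gb hyg (hb j),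
        ← qmap_sum (pmap φ g' yb gb (hb j))]
      exact addsub_sum_apply _ _ _
    rw [h3, map_sum φ, Finset.mul_sum]

end BDivEndR

end Main


section LeftSide

variable {B A : Type} [Ring B] [Ring A] (φ : B →+* A)
variable {n m J K : ℕ}

/-- Component of the map `A ⊗_B A → End(_B A)^m`. -/
def cF1 (f' : A →+ (Fin m → ldualSub φ)) (i : Fin m) (x y : A) : endL φ :=
  ⟨(AddMonoidHom.mk' (fun z => φ (((f' x i : ldualSub φ) : A →+ B) z) * y)
      (fun z z' => by
        show φ (((f' x i : ldualSub φ) : A →+ B) (z + z')) * y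
          = φ (((f' x i : ldualSub φ) : A →+ B) z) * y
            + φ (((f' x i : ldualSub φ) : A →+ B) z') * y
        rw [map_add, map_add, add_mul]) : A →+ A),
   fun b z => by
      show φ (((f' x i : ldualSub φ) : A →+ B) (φ b * z)) * y
        = φ b * (φ (((f' x i : ldualSub φ) : A →+ B) z) * y)
      rw [(f' x i).2 b z, map_mul, mul_assoc]⟩

lemma cF1_apply (f' : A →+ (Fin m → ldualSub φ)) (i : Fin m) (x y z : A) :
    ((cF1 φ f' i x y).1 : A →+ A) z
      = φ (((f' x i : ldualSub φ) : A →+ B) z) * y := rfl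

lemma cF1_add_left (f' : A →+ (Fin m → ldualSub φ)) (i : Fin m) (x x' y : A) :
    cF1 φ f' i (x + x') y = cF1 φ f' i x y + cF1 φ f' i x' y := by
  apply Subtype.ext
  refine AddMonoidHom.ext fun z => ?_
  show φ (((f' (x + x') i : ldualSub φ) : A →+ B) z) * y = _
  rw [map_add f']
  show φ ((((f' x i + f' x' i) : ldualSub φ) : A →+ B) z) * y = _
  rw [AddSubgroup.coe_add, AddMonoidHom.add_apply, map_add, add_mul]
  rfl

lemma cF1_add_right (f' : A →+ (Fin m → ldualSub φ)) (i : Fin m) (x y y' : A) :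
    cF1 φ f' i x (y + y') = cF1 φ f' i x y + cF1 φ f' i x y' := by
  apply Subtype.ext
  refine AddMonoidHom.ext fun z => ?_
  show _ * (y + y') = _ * y + _ * y'
  rw [mul_add]

lemma cF1_mid (f' : A →+ (Fin m → ldualSub φ))
    (hf'_r : ∀ (x : A) (b : B), f' (x * φ b) = fun i => ldualR φ (f' x i) b)
    (i : Fin m) (x : A) (b : B) (y : A) :
    cF1 φ f' i (x * φ b) y = cF1 φ f' i x (φ b * y) := by
  apply Subtype.ext
  refine AddMonoidHom.ext fun z => ?_
  show φ (((f' (x * φ b) i : ldualSub φ) : A →+ B) z) * y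
    = φ (((f' x i : ldualSub φ) : A →+ B) z) * (φ b * y)
  rw [hf'_r x b]
  show φ (((ldualR φ (f' x i) b : ldualSub φ) : A →+ B) z) * y = _
  rw [ldualR_apply, map_mul, mul_assoc]

/-- The map `A ⊗_B A → End(_B A)^m`. -/
def Fmap1 (f' : A →+ (Fin m → ldualSub φ))
    (hf'_r : ∀ (x : A) (b : B), f' (x * φ b) = fun i => ldualR φ (f' x i) b) :
    TensorSq φ →+ (Fin m → endL φ) :=
  AddMonoidHom.mk'
    (fun t i => mkT φ (fun x y => cF1 φ f' i x y) (cF1_add_left φ f' i)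
      (cF1_add_right φ f' i) (cF1_mid φ f' hf'_r i) t)
    (fun s t => funext fun i => map_add _ s t)

lemma Fmap1_tmk (f' : A →+ (Fin m → ldualSub φ))
    (hf'_r : ∀ (x : A) (b : B), f' (x * φ b) = fun i => ldualR φ (f' x i) b) (x y : A) :
    Fmap1 φ f' hf'_r (tmk φ x y) = fun i => cF1 φ f' i x y :=
  funext fun i => by
    show mkT φ (fun x y => cF1 φ f' i x y) (cF1_add_left φ f' i) (cF1_add_right φ f' i)
      (cF1_mid φ f' hf'_r i) (tmk φ x y) = cF1 φ f' i x y
    exact mkT_tmk φ _ _ _ _ x y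

/-- The map `End(_B A)^m → A ⊗_B A`. -/
def Gmap1 (g' : (Fin m → ldualSub φ) →+ A) (yb : Fin K → A) (gb : Fin K → ldualSub φ) :
    (Fin m → endL φ) →+ TensorSq φ :=
  AddMonoidHom.mk'
    (fun v => ∑ k, ∑ i, tmk φ (g' (Pi.single i (gb k))) (((v i).1 : A →+ A) (yb k)))
    (fun v w => by
      rw [← Finset.sum_add_distrib]
      refine Finset.sum_congr rfl fun k _ => ?_
      rw [← Finset.sum_add_distrib]
      refine Finset.sum_congr rfl fun i _ => ?_
      have : (((v + w) i).1 : A →+ A) (yb k)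
          = ((v i).1 : A →+ A) (yb k) + ((w i).1 : A →+ A) (yb k) := rfl
      rw [this, tmk_add_right])

lemma Gmap1_apply (g' : (Fin m → ldualSub φ) →+ A) (yb : Fin K → A) (gb : Fin K → ldualSub φ)
    (v : Fin m → endL φ) :
    Gmap1 φ g' yb gb v
      = ∑ k, ∑ i, tmk φ (g' (Pi.single i (gb k))) (((v i).1 : A →+ A) (yb k)) := rfl

/-- The derived map `(_B A)^* → A^n`. -/
def pmap1 (g : (Fin n → rdualSub φ) →+ A) (xb : Fin J → A) (hb : Fin J → rdualSub φ)
    (l : ldualSub φ) (k : Fin n) : A :=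
  ∑ j, xb j * φ ((l : A →+ B) (g (Pi.single k (hb j))))

lemma pmap1_add (g : (Fin n → rdualSub φ) →+ A) (xb : Fin J → A) (hb : Fin J → rdualSub φ)
    (l l' : ldualSub φ) (k : Fin n) :
    pmap1 φ g xb hb (l + l') k = pmap1 φ g xb hb l k + pmap1 φ g xb hb l' k := by
  unfold pmap1
  rw [← Finset.sum_add_distrib]
  refine Finset.sum_congr rfl fun j _ => ?_
  show xb j * φ ((((l : A →+ B) + (l' : A →+ B))) _) = _
  rw [AddMonoidHom.add_apply, map_add, mul_add]

/-- The derived map `A^n → (_B A)^*`. -/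
def qmap1 (f : A →+ (Fin n → rdualSub φ))
    (hf_l : ∀ (b : B) (x : A), f (φ b * x) = fun i => rdualL φ b (f x i))
    (v : Fin n → A) : ldualSub φ :=
  ⟨AddMonoidHom.mk' (fun a => ∑ k, ((f a k : rdualSub φ) : A →+ B) (v k))
      (fun a a' => by
        rw [← Finset.sum_add_distrib]
        refine Finset.sum_congr rfl fun k _ => ?_
        rw [map_add f]
        show (((f a k + f a' k) : rdualSub φ) : A →+ B) (v k) = _
        rw [AddSubgroup.coe_add, AddMonoidHom.add_apply]),
   fun b x => by
      show ∑ k, ((f (φ b * x) k : rdualSub φ) : A →+ B) (v k)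
        = b * ∑ k, ((f x k : rdualSub φ) : A →+ B) (v k)
      rw [hf_l b x, Finset.mul_sum]
      exact Finset.sum_congr rfl fun k _ => rfl⟩

lemma qmap1_apply (f : A →+ (Fin n → rdualSub φ))
    (hf_l : ∀ (b : B) (x : A), f (φ b * x) = fun i => rdualL φ b (f x i))
    (v : Fin n → A) (a : A) :
    ((qmap1 φ f hf_l v : ldualSub φ) : A →+ B) a
      = ∑ k, ((f a k : rdualSub φ) : A →+ B) (v k) := rfl

lemma qmap1_add (f : A →+ (Fin n → rdualSub φ))
    (hf_l : ∀ (b : B) (x : A), f (φ b * x) = fun i => rdualL φ b (f x i))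
    (v w : Fin n → A) :
    qmap1 φ f hf_l (v + w) = qmap1 φ f hf_l v + qmap1 φ f hf_l w := by
  apply Subtype.ext
  refine AddMonoidHom.ext fun a => ?_
  show ∑ k, ((f a k : rdualSub φ) : A →+ B) (v k + w k) = _
  rw [show ((((qmap1 φ f hf_l v + qmap1 φ f hf_l w) : ldualSub φ)) : A →+ B) a
    = ∑ k, ((f a k : rdualSub φ) : A →+ B) (v k)
      + ∑ k, ((f a k : rdualSub φ) : A →+ B) (w k) from rfl, ← Finset.sum_add_distrib]
  exact Finset.sum_congr rfl fun k _ => map_add _ _ _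

/-- Bundled `qmap1`. -/
def qhom1 (f : A →+ (Fin n → rdualSub φ))
    (hf_l : ∀ (b : B) (x : A), f (φ b * x) = fun i => rdualL φ b (f x i)) :
    (Fin n → A) →+ ldualSub φ :=
  AddMonoidHom.mk' (qmap1 φ f hf_l) (qmap1_add φ f hf_l)

lemma q1_ldualR (f : A →+ (Fin n → rdualSub φ))
    (hf_l : ∀ (b : B) (x : A), f (φ b * x) = fun i => rdualL φ b (f x i))
    (v : Fin n → A) (b : B) :
    qmap1 φ f hf_l (fun k => v k * φ b) = ldualR φ (qmap1 φ f hf_l v) b := by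
  apply Subtype.ext
  refine AddMonoidHom.ext fun a => ?_
  rw [qmap1_apply, ldualR_apply, qmap1_apply, Finset.sum_mul]
  exact Finset.sum_congr rfl fun k _ => (f a k).2 (v k) b

lemma q1_ldualL (f : A →+ (Fin n → rdualSub φ))
    (hf_l : ∀ (b : B) (x : A), f (φ b * x) = fun i => rdualL φ b (f x i))
    (hf_r : ∀ (x a : A), f (x * a) = fun i => rdualR φ (f x i) a)
    (v : Fin n → A) (a : A) :
    qmap1 φ f hf_l (fun k => a * v k) = ldualL φ a (qmap1 φ f hf_l v) := by
  apply Subtype.ext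
  refine AddMonoidHom.ext fun z => ?_
  rw [qmap1_apply, ldualL_apply, qmap1_apply]
  conv_rhs => rw [show (∑ k, ((f (z * a) k : rdualSub φ) : A →+ B) (v k))
    = ∑ k, ((rdualR φ (f z k) a : rdualSub φ) : A →+ B) (v k) from by rw [hf_r z a]]
  rfl

lemma g_single_rdualL' (g : (Fin n → rdualSub φ) →+ A)
    (hg_l : ∀ (b : B) (v : Fin n → rdualSub φ), g (fun i => rdualL φ b (v i)) = φ b * g v)
    (b : B) (k : Fin n) (w : rdualSub φ) :
    g (Pi.single k (rdualL φ b w)) = φ b * g (Pi.single k w) := by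
  rw [← hg_l b (Pi.single k w)]
  congr 1
  exact (single_map (rdualL φ b) (rdualL_zero φ b) k w).symm

lemma g_single_rdualR' (g : (Fin n → rdualSub φ) →+ A)
    (hg_r : ∀ (v : Fin n → rdualSub φ) (a : A), g (fun i => rdualR φ (v i) a) = g v * a)
    (k : Fin n) (w : rdualSub φ) (a : A) :
    g (Pi.single k (rdualR φ w a)) = g (Pi.single k w) * a := by
  rw [← hg_r (Pi.single k w) a]
  congr 1
  exact (single_map (fun u => rdualR φ u a) (rdualR_zero φ a) k w).symm

lemma p1_ldualR (g : (Fin n → rdualSub φ) →+ A) (xb : Fin J → A) (hb : Fin J → rdualSub φ)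
    (l : ldualSub φ) (b : B) :
    pmap1 φ g xb hb (ldualR φ l b) = fun k => pmap1 φ g xb hb l k * φ b := by
  funext k
  unfold pmap1
  rw [Finset.sum_mul]
  refine Finset.sum_congr rfl fun j _ => ?_
  rw [ldualR_apply, map_mul, mul_assoc]

lemma p1_ldualL (g : (Fin n → rdualSub φ) →+ A) (xb : Fin J → A) (hb : Fin J → rdualSub φ)
    (hg_l : ∀ (b : B) (v : Fin n → rdualSub φ), g (fun i => rdualL φ b (v i)) = φ b * g v)
    (hg_r : ∀ (v : Fin n → rdualSub φ) (a : A), g (fun i => rdualR φ (v i) a) = g v * a)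
    (hxh : ∀ a : A, ∑ j, xb j * φ ((hb j).1 a) = a)
    (l : ldualSub φ) (a : A) :
    pmap1 φ g xb hb (ldualL φ a l) = fun k => a * pmap1 φ g xb hb l k := by
  funext k
  unfold pmap1
  calc ∑ j, xb j * φ (((ldualL φ a l : ldualSub φ) : A →+ B) (g (Pi.single k (hb j))))
      = ∑ j, xb j * φ ((l : A →+ B) (g (Pi.single k (rdualR φ (hb j) a)))) := by
        refine Finset.sum_congr rfl fun j _ => ?_
        rw [ldualL_apply, g_single_rdualR' φ g hg_r]
    _ = ∑ j, ∑ t, xb j * (φ (((hb j) : A →+ B) (a * xb t))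
          * φ ((l : A →+ B) (g (Pi.single k (hb t))))) := by
        refine Finset.sum_congr rfl fun j _ => ?_
        conv_lhs => rw [← rdual_expand φ xb hb hxh (rdualR φ (hb j) a)]
        have : ∀ t, ((rdualR φ (hb j) a : rdualSub φ) : A →+ B) (xb t)
            = ((hb j) : A →+ B) (a * xb t) := fun t => rfl
        simp only [this]
        rw [single_sum, map_sum g, map_sum (l : A →+ B), map_sum φ, Finset.mul_sum]
        refine Finset.sum_congr rfl fun t _ => ?_
        rw [g_single_rdualL' φ g hg_l, l.2, map_mul]
    _ = ∑ t, (∑ j, xb j * φ (((hb j) : A →+ B) (a * xb t)))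
          * φ ((l : A →+ B) (g (Pi.single k (hb t)))) := by
        rw [Finset.sum_comm]
        refine Finset.sum_congr rfl fun t _ => ?_
        rw [Finset.sum_mul]
        refine Finset.sum_congr rfl fun j _ => ?_
        rw [mul_assoc]
    _ = a * ∑ t, xb t * φ ((l : A →+ B) (g (Pi.single k (hb t)))) := by
        rw [Finset.mul_sum]
        refine Finset.sum_congr rfl fun t _ => ?_
        rw [hxh (a * xb t), mul_assoc]

lemma qp1_eq (f : A →+ (Fin n → rdualSub φ)) (g : (Fin n → rdualSub φ) →+ A)
    (hf_l : ∀ (b : B) (x : A), f (φ b * x) = fun i => rdualL φ b (f x i))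
    (hg_l : ∀ (b : B) (v : Fin n → rdualSub φ), g (fun i => rdualL φ b (v i)) = φ b * g v)
    (hgf : ∀ x : A, g (f x) = x)
    (xb : Fin J → A) (hb : Fin J → rdualSub φ)
    (hxh : ∀ a : A, ∑ j, xb j * φ ((hb j).1 a) = a)
    (l : ldualSub φ) :
    qmap1 φ f hf_l (pmap1 φ g xb hb l) = l := by
  apply Subtype.ext
  refine AddMonoidHom.ext fun a => ?_
  rw [qmap1_apply]
  calc ∑ k, ((f a k : rdualSub φ) : A →+ B) (pmap1 φ g xb hb l k)
      = ∑ k, ∑ j, ((f a k : rdualSub φ) : A →+ B) (xb j)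
          * ((l : A →+ B) (g (Pi.single k (hb j)))) := by
        refine Finset.sum_congr rfl fun k _ => ?_
        unfold pmap1
        rw [map_sum]
        exact Finset.sum_congr rfl fun j _ => (f a k).2 (xb j) _
    _ = ∑ k, ∑ j, (l : A →+ B) (g (Pi.single k
          (rdualL φ (((f a k : rdualSub φ) : A →+ B) (xb j)) (hb j)))) := by
        refine Finset.sum_congr rfl fun k _ => Finset.sum_congr rfl fun j _ => ?_
        rw [g_single_rdualL' φ g hg_l, l.2]
    _ = ∑ k, (l : A →+ B) (g (Pi.single k (f a k))) := by
        refine Finset.sum_congr rfl fun k _ => ?_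
        conv_rhs => rw [← rdual_expand φ xb hb hxh (f a k), single_sum,
          map_sum g, map_sum (l : A →+ B)]
    _ = (l : A →+ B) a := by
        conv_rhs => rw [← hgf a, ← Finset.univ_sum_single (f a),
          map_sum g, map_sum (l : A →+ B)]

/-- Component of the map `(A ⊗_B A)^n → End(_B A)` used in `Qmap1`. -/
def dQ1 (f : A →+ (Fin n → rdualSub φ))
    (hf_l : ∀ (b : B) (x : A), f (φ b * x) = fun i => rdualL φ b (f x i))
    (k : Fin n) (x y : A) : endL φ :=
  ⟨(AddMonoidHom.mk'
      (fun z => φ (((qmap1 φ f hf_l (Pi.single k x) : ldualSub φ) : A →+ B) z) * y)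
      (fun z z' => by
        show φ (((qmap1 φ f hf_l (Pi.single k x) : ldualSub φ) : A →+ B) (z + z')) * y = _
        rw [map_add, map_add, add_mul]) : A →+ A),
   fun b z => by
      show φ (((qmap1 φ f hf_l (Pi.single k x) : ldualSub φ) : A →+ B) (φ b * z)) * y
        = φ b * (φ (((qmap1 φ f hf_l (Pi.single k x) : ldualSub φ) : A →+ B) z) * y)
      rw [(qmap1 φ f hf_l (Pi.single k x)).2 b z, map_mul, mul_assoc]⟩

lemma dQ1_add_left (f : A →+ (Fin n → rdualSub φ)) (hf_l) (k : Fin n) (x x' y : A) :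
    dQ1 φ f hf_l k (x + x') y = dQ1 φ f hf_l k x y + dQ1 φ f hf_l k x' y := by
  apply Subtype.ext
  refine AddMonoidHom.ext fun z => ?_
  show φ (((qmap1 φ f hf_l (Pi.single k (x + x')) : ldualSub φ) : A →+ B) z) * y = _
  rw [show (Pi.single k (x + x') : Fin n → A) = Pi.single k x + Pi.single k x' from
    Pi.single_add (f := fun _ : Fin n => A) k x x', qmap1_add]
  show φ ((((qmap1 φ f hf_l (Pi.single k x) + qmap1 φ f hf_l (Pi.single k x'))
    : ldualSub φ) : A →+ B) z) * y = _
  rw [AddSubgroup.coe_add, AddMonoidHom.add_apply, map_add, add_mul]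
  rfl

lemma dQ1_add_right (f : A →+ (Fin n → rdualSub φ)) (hf_l) (k : Fin n) (x y y' : A) :
    dQ1 φ f hf_l k x (y + y') = dQ1 φ f hf_l k x y + dQ1 φ f hf_l k x y' := by
  apply Subtype.ext
  refine AddMonoidHom.ext fun z => ?_
  show _ * (y + y') = _ * y + _ * y'
  rw [mul_add]

lemma dQ1_mid (f : A →+ (Fin n → rdualSub φ)) (hf_l) (k : Fin n) (x : A) (b : B) (y : A) :
    dQ1 φ f hf_l k (x * φ b) y = dQ1 φ f hf_l k x (φ b * y) := by
  apply Subtype.ext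
  refine AddMonoidHom.ext fun z => ?_
  show φ (((qmap1 φ f hf_l (Pi.single k (x * φ b)) : ldualSub φ) : A →+ B) z) * y
    = φ (((qmap1 φ f hf_l (Pi.single k x) : ldualSub φ) : A →+ B) z) * (φ b * y)
  rw [show (Pi.single k (x * φ b) : Fin n → A)
      = fun i => (Pi.single k x : Fin n → A) i * φ b
    from (single_map (fun u => u * φ b) (zero_mul (φ b)) k x).symm,
    q1_ldualR φ f hf_l, ldualR_apply, map_mul, mul_assoc]

/-- The map `End(_B A) → (A ⊗_B A)^n`. -/
def Pmap1 (g : (Fin n → rdualSub φ) →+ A) (xb : Fin J → A) (hb : Fin J → rdualSub φ)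
    (yb : Fin K → A) (gb : Fin K → ldualSub φ) : endL φ →+ (Fin n → TensorSq φ) :=
  AddMonoidHom.mk'
    (fun e k => ∑ t, tmk φ (pmap1 φ g xb hb (gb t) k) ((e.1 : A →+ A) (yb t)))
    (fun e e' => by
      funext k
      show ∑ t, tmk φ _ (((e + e').1 : A →+ A) (yb t)) = _
      rw [show ((fun k => ∑ t, tmk φ (pmap1 φ g xb hb (gb t) k) ((e.1 : A →+ A) (yb t))) +
        fun k => ∑ t, tmk φ (pmap1 φ g xb hb (gb t) k) (((e').1 : A →+ A) (yb t))) k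
        = ∑ t, tmk φ (pmap1 φ g xb hb (gb t) k) ((e.1 : A →+ A) (yb t))
          + ∑ t, tmk φ (pmap1 φ g xb hb (gb t) k) (((e').1 : A →+ A) (yb t)) from rfl,
        ← Finset.sum_add_distrib]
      refine Finset.sum_congr rfl fun t _ => ?_
      rw [show (((e + e').1 : A →+ A)) (yb t)
        = (e.1 : A →+ A) (yb t) + ((e').1 : A →+ A) (yb t) from rfl, tmk_add_right])

lemma Pmap1_apply (g : (Fin n → rdualSub φ) →+ A) (xb : Fin J → A) (hb : Fin J → rdualSub φ)
    (yb : Fin K → A) (gb : Fin K → ldualSub φ) (e : endL φ) (k : Fin n) :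
    Pmap1 φ g xb hb yb gb e k
      = ∑ t, tmk φ (pmap1 φ g xb hb (gb t) k) ((e.1 : A →+ A) (yb t)) := rfl

/-- The map `(A ⊗_B A)^n → End(_B A)`. -/
def Qmap1 (f : A →+ (Fin n → rdualSub φ))
    (hf_l : ∀ (b : B) (x : A), f (φ b * x) = fun i => rdualL φ b (f x i)) :
    (Fin n → TensorSq φ) →+ endL φ :=
  AddMonoidHom.mk'
    (fun t => ∑ k, mkT φ (fun x y => dQ1 φ f hf_l k x y) (dQ1_add_left φ f hf_l k)
      (dQ1_add_right φ f hf_l k) (dQ1_mid φ f hf_l k) (t k))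
    (fun t t' => by
      rw [← Finset.sum_add_distrib]
      refine Finset.sum_congr rfl fun k _ => ?_
      rw [show (t + t') k = t k + t' k from rfl, map_add])

lemma Qmap1_apply (f : A →+ (Fin n → rdualSub φ))
    (hf_l : ∀ (b : B) (x : A), f (φ b * x) = fun i => rdualL φ b (f x i))
    (t : Fin n → TensorSq φ) :
    Qmap1 φ f hf_l t = ∑ k, mkT φ (fun x y => dQ1 φ f hf_l k x y)
      (dQ1_add_left φ f hf_l k) (dQ1_add_right φ f hf_l k) (dQ1_mid φ f hf_l k) (t k) := rfl

end LeftSide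

section BDivEndL

variable {B A : Type} [Ring B] [Ring A] (φ : B →+* A)
variable {n m J K : ℕ}

/-- Left action of `A` on `End(_B A)`, bundled. -/
def endLLhom (a : A) : endL φ →+ endL φ :=
  AddMonoidHom.mk' (endLL φ a) (fun u v => by
    apply Subtype.ext
    refine AddMonoidHom.ext fun z => ?_
    rfl)

/-- Right action of `A` on `End(_B A)`, bundled. -/
def endLRhom (a : A) : endL φ →+ endL φ :=
  AddMonoidHom.mk' (fun u => endLR φ u a) (fun u v => by
    apply Subtype.ext
    refine AddMonoidHom.ext fun z => ?_
    show ((u + v).1 : A →+ A) z * a = _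
    rw [show ((u + v).1 : A →+ A) z = (u.1 : A →+ A) z + (v.1 : A →+ A) z from rfl, add_mul]
    rfl)

lemma bdiv_endL_T
    (f : A →+ (Fin n → rdualSub φ)) (g : (Fin n → rdualSub φ) →+ A)
    (hf_l : ∀ (b : B) (x : A), f (φ b * x) = fun i => rdualL φ b (f x i))
    (hf_r : ∀ (x a : A), f (x * a) = fun i => rdualR φ (f x i) a)
    (hg_l : ∀ (b : B) (v : Fin n → rdualSub φ), g (fun i => rdualL φ b (v i)) = φ b * g v)
    (hg_r : ∀ (v : Fin n → rdualSub φ) (a : A), g (fun i => rdualR φ (v i) a) = g v * a)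
    (hgf : ∀ x : A, g (f x) = x)
    (xb : Fin J → A) (hb : Fin J → rdualSub φ)
    (hxh : ∀ a : A, ∑ j, xb j * φ ((hb j).1 a) = a)
    (yb : Fin K → A) (gb : Fin K → ldualSub φ)
    (hyg : ∀ a : A, ∑ t, φ ((gb t).1 a) * yb t = a) :
    BDiv A A (fun x f => endLL φ x f) (fun f y => endLR φ f y)
      (fun a t => tL φ a t) (fun t a => tR φ a t) := by
  have hΨl : ∀ (k : Fin n) (w w' : ldualSub φ) (u : A),
      tmk φ (pmap1 φ g xb hb (w + w') k) u
        = tmk φ (pmap1 φ g xb hb w k) u + tmk φ (pmap1 φ g xb hb w' k) u := by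
    intro k w w' u
    rw [pmap1_add, tmk_add_left]
  have hΨr : ∀ (k : Fin n) (w : ldualSub φ) (u u' : A),
      tmk φ (pmap1 φ g xb hb w k) (u + u')
        = tmk φ (pmap1 φ g xb hb w k) u + tmk φ (pmap1 φ g xb hb w k) u' :=
    fun k w u u' => tmk_add_right φ _ u u'
  have hΨm : ∀ (k : Fin n) (w : ldualSub φ) (b : B) (u : A),
      tmk φ (pmap1 φ g xb hb (ldualR φ w b) k) u
        = tmk φ (pmap1 φ g xb hb w k) (φ b * u) := by
    intro k w b u
    rw [p1_ldualR]
    exact tmk_rel φ _ b u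
  refine ⟨n, Pmap1 φ g xb hb yb gb, Qmap1 φ f hf_l, ?_, ?_, ?_, ?_, ?_⟩
  · intro a e'
    beta_reduce
    funext k
    calc Pmap1 φ g xb hb yb gb (endLL φ a e') k
        = ∑ t, tmk φ (pmap1 φ g xb hb (gb t) k) ((e'.1 : A →+ A) (yb t * a)) := rfl
      _ = ∑ t, tmk φ (pmap1 φ g xb hb (ldualL φ a (gb t)) k) ((e'.1 : A →+ A) (yb t)) :=
          (keyL φ yb gb hyg (fun w u => tmk φ (pmap1 φ g xb hb w k) u)
            (hΨl k) (hΨr k) (hΨm k) e' a).symm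
      _ = tL φ a (Pmap1 φ g xb hb yb gb e' k) := by
          rw [Pmap1_apply, map_sum (tL φ a)]
          refine Finset.sum_congr rfl fun t _ => ?_
          simp only [tL_tmk, p1_ldualL φ g xb hb hg_l hg_r hxh]
  · intro e' a
    beta_reduce
    funext k
    rw [show Pmap1 φ g xb hb yb gb (endLR φ e' a) k
      = ∑ t, tmk φ (pmap1 φ g xb hb (gb t) k) ((e'.1 : A →+ A) (yb t) * a) from rfl,
      Pmap1_apply, map_sum (tR φ a)]
    simp only [tR_tmk]
  · intro a t
    beta_reduce
    have rhs_eq : endLL φ a (Qmap1 φ f hf_l t)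
        = ∑ k, endLLhom φ a (mkT φ (fun x y => dQ1 φ f hf_l k x y) (dQ1_add_left φ f hf_l k)
            (dQ1_add_right φ f hf_l k) (dQ1_mid φ f hf_l k) (t k)) := by
      rw [show endLL φ a (Qmap1 φ f hf_l t) = endLLhom φ a (Qmap1 φ f hf_l t) from rfl,
        Qmap1_apply, map_sum (endLLhom φ a)]
    rw [rhs_eq, Qmap1_apply]
    refine Finset.sum_congr rfl fun k _ => ?_
    refine TensorSq.ind φ (p := fun s => mkT φ (fun x y => dQ1 φ f hf_l k x y)
      (dQ1_add_left φ f hf_l k) (dQ1_add_right φ f hf_l k) (dQ1_mid φ f hf_l k) (tL φ a s)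
      = endLLhom φ a (mkT φ (fun x y => dQ1 φ f hf_l k x y) (dQ1_add_left φ f hf_l k)
        (dQ1_add_right φ f hf_l k) (dQ1_mid φ f hf_l k) s)) ?_ ?_ ?_ (t k)
    · beta_reduce
      rw [map_zero, map_zero, map_zero]
    · intro s s' hs hs'
      beta_reduce
      beta_reduce at hs hs'
      rw [map_add (tL φ a), map_add, hs, hs', ← AddMonoidHom.map_add,
        ← AddMonoidHom.map_add]
    · intro x y
      beta_reduce
      rw [tL_tmk, mkT_tmk, mkT_tmk]
      apply Subtype.ext
      refine AddMonoidHom.ext fun z => ?_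
      show φ (((qmap1 φ f hf_l (Pi.single k (a * x)) : ldualSub φ) : A →+ B) z) * y
        = φ (((qmap1 φ f hf_l (Pi.single k x) : ldualSub φ) : A →+ B) (z * a)) * y
      rw [show (Pi.single k (a * x) : Fin n → A)
          = fun i => a * (Pi.single k x : Fin n → A) i
        from (single_map (fun u => a * u) (mul_zero a) k x).symm,
        q1_ldualL φ f hf_l hf_r, ldualL_apply]
  · intro t a
    beta_reduce
    have rhs_eq : endLR φ (Qmap1 φ f hf_l t) a
        = ∑ k, endLRhom φ a (mkT φ (fun x y => dQ1 φ f hf_l k x y) (dQ1_add_left φ f hf_l k)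
            (dQ1_add_right φ f hf_l k) (dQ1_mid φ f hf_l k) (t k)) := by
      rw [show endLR φ (Qmap1 φ f hf_l t) a = endLRhom φ a (Qmap1 φ f hf_l t) from rfl,
        Qmap1_apply, map_sum (endLRhom φ a)]
    rw [rhs_eq, Qmap1_apply]
    refine Finset.sum_congr rfl fun k _ => ?_
    refine TensorSq.ind φ (p := fun s => mkT φ (fun x y => dQ1 φ f hf_l k x y)
      (dQ1_add_left φ f hf_l k) (dQ1_add_right φ f hf_l k) (dQ1_mid φ f hf_l k) (tR φ a s)
      = endLRhom φ a (mkT φ (fun x y => dQ1 φ f hf_l k x y) (dQ1_add_left φ f hf_l k)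
        (dQ1_add_right φ f hf_l k) (dQ1_mid φ f hf_l k) s)) ?_ ?_ ?_ (t k)
    · beta_reduce
      rw [map_zero, map_zero, map_zero]
    · intro s s' hs hs'
      beta_reduce
      beta_reduce at hs hs'
      rw [map_add (tR φ a), map_add, hs, hs', ← AddMonoidHom.map_add,
        ← AddMonoidHom.map_add]
    · intro x y
      beta_reduce
      rw [tR_tmk, mkT_tmk, mkT_tmk]
      apply Subtype.ext
      refine AddMonoidHom.ext fun z => ?_
      show φ (((qmap1 φ f hf_l (Pi.single k x) : ldualSub φ) : A →+ B) z) * (y * a)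
        = φ (((qmap1 φ f hf_l (Pi.single k x) : ldualSub φ) : A →+ B) z) * y * a
      rw [mul_assoc]
  · intro e'
    apply Subtype.ext
    refine AddMonoidHom.ext fun z => ?_
    have qmap1_sum : ∀ (v0 : Fin n → A),
        (∑ k, qmap1 φ f hf_l (Pi.single k (v0 k))) = qmap1 φ f hf_l v0 := by
      intro v0
      have h := map_sum (qhom1 φ f hf_l) (fun k => (Pi.single k (v0 k) : Fin n → A))
        Finset.univ
      rw [Finset.univ_sum_single] at h
      exact h.symm
    have lhs_eq : ((Qmap1 φ f hf_l (Pmap1 φ g xb hb yb gb e') : endL φ)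
        : AddMonoid.End A) z
        = ∑ k, ∑ t, φ (((qmap1 φ f hf_l (Pi.single k (pmap1 φ g xb hb (gb t) k))
            : ldualSub φ) : A →+ B) z) * (e'.1 : A →+ A) (yb t) := by
      rw [Qmap1_apply, endsub_sum_apply]
      refine Finset.sum_congr rfl fun k _ => ?_
      rw [show Pmap1 φ g xb hb yb gb e' k
        = ∑ t, tmk φ (pmap1 φ g xb hb (gb t) k) ((e'.1 : A →+ A) (yb t)) from rfl,
        map_sum (mkT φ (fun x y => dQ1 φ f hf_l k x y) (dQ1_add_left φ f hf_l k)
          (dQ1_add_right φ f hf_l k) (dQ1_mid φ f hf_l k)), endsub_sum_apply]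
      refine Finset.sum_congr rfl fun t _ => ?_
      rw [mkT_tmk]
      rfl
    refine lhs_eq.trans ?_
    rw [Finset.sum_comm]
    conv_rhs => rw [← hyg z,
      map_sum (G := A →+ A) (e'.1 : A →+ A)]
    refine Finset.sum_congr rfl fun t _ => ?_
    erw [e'.2 (((gb t) : A →+ B) z) (yb t)]
    have h3 : ((gb t : ldualSub φ) : A →+ B) z
        = ∑ k, ((qmap1 φ f hf_l (Pi.single k (pmap1 φ g xb hb (gb t) k))
            : ldualSub φ) : A →+ B) z := by
      conv_lhs => rw [← qp1_eq φ f g hf_l hg_l hgf xb hb hxh (gb t),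
        ← qmap1_sum (pmap1 φ g xb hb (gb t))]
      exact addsub_sum_apply _ _ _
    rw [h3, map_sum φ, Finset.sum_mul]

lemma bdiv_T_endL
    (f' : A →+ (Fin m → ldualSub φ)) (g' : (Fin m → ldualSub φ) →+ A)
    (hf'_l : ∀ (a x : A), f' (a * x) = fun i => ldualL φ a (f' x i))
    (hf'_r : ∀ (x : A) (b : B), f' (x * φ b) = fun i => ldualR φ (f' x i) b)
    (hg'_l : ∀ (a : A) (v : Fin m → ldualSub φ), g' (fun i => ldualL φ a (v i)) = a * g' v)
    (hg'_r : ∀ (v : Fin m → ldualSub φ) (b : B), g' (fun i => ldualR φ (v i) b) = g' v * φ b)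
    (hg'f : ∀ x : A, g' (f' x) = x)
    (yb : Fin K → A) (gb : Fin K → ldualSub φ)
    (hyg : ∀ a : A, ∑ t, φ ((gb t).1 a) * yb t = a) :
    BDiv A A (fun a t => tL φ a t) (fun t a => tR φ a t)
      (fun x f => endLL φ x f) (fun f y => endLR φ f y) := by
  have hΨl : ∀ (i : Fin m) (w w' : ldualSub φ) (u : A),
      tmk φ (g' (Pi.single i (w + w'))) u
        = tmk φ (g' (Pi.single i w)) u + tmk φ (g' (Pi.single i w')) u := by
    intro i w w' u
    rw [show (Pi.single i (w + w') : Fin m → ldualSub φ) = Pi.single i w + Pi.single i w'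
      from Pi.single_add (f := fun _ : Fin m => (ldualSub φ : AddSubgroup (A →+ B))) i w w',
      map_add, tmk_add_left]
  have hΨr : ∀ (i : Fin m) (w : ldualSub φ) (u u' : A),
      tmk φ (g' (Pi.single i w)) (u + u')
        = tmk φ (g' (Pi.single i w)) u + tmk φ (g' (Pi.single i w)) u' :=
    fun i w u u' => tmk_add_right φ _ u u'
  have hΨm : ∀ (i : Fin m) (w : ldualSub φ) (b : B) (u : A),
      tmk φ (g' (Pi.single i (ldualR φ w b))) u
        = tmk φ (g' (Pi.single i w)) (φ b * u) := by
    intro i w b u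
    rw [g'_single_ldualR φ g' hg'_r]
    exact tmk_rel φ _ b u
  refine ⟨m, Fmap1 φ f' hf'_r, Gmap1 φ g' yb gb, ?_, ?_, ?_, ?_, ?_⟩
  · intro a t
    refine TensorSq.ind φ (p := fun t => Fmap1 φ f' hf'_r (tL φ a t)
      = fun i => endLL φ a (Fmap1 φ f' hf'_r t i)) ?_ ?_ ?_ t
    · beta_reduce
      rw [map_zero, map_zero]
      funext i
      show (0 : endL φ) = endLL φ a 0
      exact ((endLLhom φ a).map_zero).symm
    · intro s t hs ht
      beta_reduce
      beta_reduce at hs ht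
      rw [map_add (tL φ a), map_add (Fmap1 φ f' hf'_r), hs, ht,
        map_add (Fmap1 φ f' hf'_r)]
      funext i
      show endLL φ a (Fmap1 φ f' hf'_r s i) + endLL φ a (Fmap1 φ f' hf'_r t i)
        = endLL φ a (Fmap1 φ f' hf'_r s i + Fmap1 φ f' hf'_r t i)
      exact ((endLLhom φ a).map_add _ _).symm
    · intro x y
      beta_reduce
      rw [tL_tmk, Fmap1_tmk, Fmap1_tmk]
      funext i
      apply Subtype.ext
      refine AddMonoidHom.ext fun z => ?_
      show φ (((f' (a * x) i : ldualSub φ) : A →+ B) z) * y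
        = φ (((f' x i : ldualSub φ) : A →+ B) (z * a)) * y
      rw [hf'_l a x]
      rfl
  · intro t a
    refine TensorSq.ind φ (p := fun t => Fmap1 φ f' hf'_r (tR φ a t)
      = fun i => endLR φ (Fmap1 φ f' hf'_r t i) a) ?_ ?_ ?_ t
    · beta_reduce
      rw [map_zero, map_zero]
      funext i
      show (0 : endL φ) = endLR φ 0 a
      exact ((endLRhom φ a).map_zero).symm
    · intro s t hs ht
      beta_reduce
      beta_reduce at hs ht
      rw [map_add (tR φ a), map_add (Fmap1 φ f' hf'_r), hs, ht,
        map_add (Fmap1 φ f' hf'_r)]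
      funext i
      show endLR φ (Fmap1 φ f' hf'_r s i) a + endLR φ (Fmap1 φ f' hf'_r t i) a
        = endLR φ (Fmap1 φ f' hf'_r s i + Fmap1 φ f' hf'_r t i) a
      exact ((endLRhom φ a).map_add _ _).symm
    · intro x y
      beta_reduce
      rw [tR_tmk, Fmap1_tmk, Fmap1_tmk]
      funext i
      apply Subtype.ext
      refine AddMonoidHom.ext fun z => ?_
      show φ (((f' x i : ldualSub φ) : A →+ B) z) * (y * a)
        = φ (((f' x i : ldualSub φ) : A →+ B) z) * y * a
      rw [mul_assoc]
  · intro a v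
    beta_reduce
    have expand_tL : tL φ a (Gmap1 φ g' yb gb v)
        = ∑ i, ∑ k, tmk φ (g' (Pi.single i (ldualL φ a (gb k))))
            (((v i).1 : A →+ A) (yb k)) := by
      rw [Gmap1_apply, map_sum (tL φ a)]
      simp only [map_sum, tL_tmk]
      simp only [← g'_single_ldualL φ g' hg'_l]
      rw [Finset.sum_comm]
    rw [expand_tL, Gmap1_apply, Finset.sum_comm]
    refine Finset.sum_congr rfl fun i _ => ?_
    exact (keyL φ yb gb hyg (fun w u => tmk φ (g' (Pi.single i w)) u)
      (hΨl i) (hΨr i) (hΨm i) (v i) a).symm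
  · intro v a
    beta_reduce
    rw [Gmap1_apply, Gmap1_apply, map_sum (tR φ a)]
    refine Finset.sum_congr rfl fun k _ => ?_
    rw [map_sum (tR φ a)]
    refine Finset.sum_congr rfl fun i _ => ?_
    rw [tR_tmk]
    rfl
  · intro t
    refine TensorSq.ind φ (p := fun t => Gmap1 φ g' yb gb (Fmap1 φ f' hf'_r t) = t)
      ?_ ?_ ?_ t
    · beta_reduce
      rw [map_zero, map_zero]
    · intro s t hs ht
      beta_reduce
      beta_reduce at hs ht
      rw [map_add, map_add, hs, ht]
    · intro x y
      beta_reduce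
      rw [Fmap1_tmk, Gmap1_apply]
      calc ∑ k, ∑ i, tmk φ (g' (Pi.single i (gb k)))
            (((cF1 φ f' i x y).1 : A →+ A) (yb k))
          = ∑ i, ∑ k, tmk φ (g' (Pi.single i
              (ldualR φ (gb k) (((f' x i : ldualSub φ) : A →+ B) (yb k))))) y := by
            rw [Finset.sum_comm]
            refine Finset.sum_congr rfl fun i _ => Finset.sum_congr rfl fun k _ => ?_
            rw [cF1_apply, ← tmk_rel, ← g'_single_ldualR φ g' hg'_r]
        _ = ∑ i, tmk φ (g' (Pi.single i (f' x i))) y := by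
            refine Finset.sum_congr rfl fun i _ => ?_
            conv_rhs => rw [← ldual_expand φ yb gb hyg (f' x i), single_sum, map_sum g',
              tmk_suml]
        _ = tmk φ x y := by
            conv_rhs => rw [← hg'f x, ← Finset.univ_sum_single (f' x), map_sum g',
              tmk_suml]

end BDivEndL


/-- If `A/B` is a QF ring extension, then the natural `(A,A)`-bimodules `End(_B A)`,
`A ⊗_B A` and `End(A_B)` are pairwise similar; moreover `A ⊗_B A ∼ End(A_B)` as
`(E,A)`-bimodules where `E = End(A_B)`. -/
theorem qf_tensorSquare_similarities {B A : Type} [Ring B] [Ring A] (φ : B →+* A)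
    (hqf : IsQFExt φ) :
    BSim A A (fun x f => endLL φ x f) (fun f y => endLR φ f y)
      (fun a t => tL φ a t) (fun t a => tR φ a t) ∧
    BSim A A (fun a t => tL φ a t) (fun t a => tR φ a t)
      (fun a e => lam φ a * e) (fun e a => e * lam φ a) ∧
    BSim A A (fun x f => endLL φ x f) (fun f y => endLR φ f y)
      (fun a e => lam φ a * e) (fun e a => e * lam φ a) ∧
    BSim (↥(endR φ)) A (fun e t => endRTmulL φ e t) (fun t a => tR φ a t)
      (fun e f => e * f) (fun f a => f * lam φ a) := by
  obtain ⟨⟨hlfp, hldiv⟩, hrfp, hrdiv⟩ := hqf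
  obtain ⟨J, xb, hb, hxh⟩ := exists_rdual_basis φ hrfp
  obtain ⟨K, yb, gb, hyg⟩ := exists_ldual_basis φ hlfp
  obtain ⟨n, f, g, hf_l, hf_r, hg_l, hg_r, hgf⟩ := hrdiv
  obtain ⟨m, f', g', hf'_l, hf'_r, hg'_l, hg'_r, hg'f⟩ := hldiv
  have d1 : BDiv (↥(endR φ)) A (fun e t => endRTmulL φ e t) (fun t a => tR φ a t)
      (fun e f => e * f) (fun f a => f * lam φ a) :=
    bdiv_T_endR φ f g hf_l hf_r hg_l hg_r hgf xb hb hxh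
  have d2 : BDiv (↥(endR φ)) A (fun e f => e * f) (fun f a => f * lam φ a)
      (fun e t => endRTmulL φ e t) (fun t a => tR φ a t) :=
    bdiv_endR_T φ f' g' hf'_l hf'_r hg'_l hg'_r hg'f yb gb hyg xb hb hxh
  have d3 : BDiv A A (fun x f => endLL φ x f) (fun f y => endLR φ f y)
      (fun a t => tL φ a t) (fun t a => tR φ a t) :=
    bdiv_endL_T φ f g hf_l hf_r hg_l hg_r hgf xb hb hxh yb gb hyg
  have d4 : BDiv A A (fun a t => tL φ a t) (fun t a => tR φ a t)
      (fun x f => endLL φ x f) (fun f y => endLR φ f y) :=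
    bdiv_T_endL φ f' g' hf'_l hf'_r hg'_l hg'_r hg'f yb gb hyg
  have endRT_lam : ∀ (a : A) (t : TensorSq φ), endRTmulL φ (lam φ a) t = tL φ a t := by
    intro a t
    refine TensorSq.ind φ (p := fun t => endRTmulL φ (lam φ a) t = tL φ a t) ?_ ?_ ?_ t
    · beta_reduce
      rw [map_zero, map_zero]
    · intro s s' hs hs'
      beta_reduce
      beta_reduce at hs hs'
      rw [map_add, map_add, hs, hs']
    · intro x y
      beta_reduce
      rw [endRTmulL_tmk, tL_tmk]
      rfl
  have d1' : BDiv A A (fun a t => tL φ a t) (fun t a => tR φ a t)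
      (fun a e => lam φ a * e) (fun e a => e * lam φ a) := by
    obtain ⟨N, F, G, h1, h2, h3, h4, h5⟩ := d1
    refine ⟨N, F, G, ?_, ?_, ?_, ?_, h5⟩
    · intro a t
      beta_reduce
      rw [← endRT_lam a t]
      exact h1 (lam φ a) t
    · intro t a
      exact h2 t a
    · intro a v
      beta_reduce
      rw [← endRT_lam a (G v)]
      exact h3 (lam φ a) v
    · intro v a
      exact h4 v a
  have d2' : BDiv A A (fun a e => lam φ a * e) (fun e a => e * lam φ a)
      (fun a t => tL φ a t) (fun t a => tR φ a t) := by
    obtain ⟨N, F, G, h1, h2, h3, h4, h5⟩ := d2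
    refine ⟨N, F, G, ?_, ?_, ?_, ?_, h5⟩
    · intro a e
      beta_reduce
      have := h1 (lam φ a) e
      beta_reduce at this
      rw [this]
      funext i
      exact endRT_lam a (F e i)
    · intro e a
      exact h2 e a
    · intro a v
      beta_reduce
      have hv : (fun i => tL φ a (v i)) = fun i => endRTmulL φ (lam φ a) (v i) :=
        funext fun i => (endRT_lam a (v i)).symm
      rw [hv]
      exact h3 (lam φ a) v
    · intro v a
      exact h4 v a
  exact ⟨⟨d3, d4⟩, ⟨d1', d2'⟩, ⟨BDiv.trans d3 d1', BDiv.trans d2' d4⟩, d1, d2⟩
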